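/- arXiv:2106.15131 — 8 statements merged into one kernel-verified Lean document; each statement's English description precedes it below -/
import Mathlib

section
/- Let Φ be an N-function with index s ≥ 1. Then Φ(t)/t ≤ Φ'(t) for every t > 0, and Φ'(t) ≤ (1+s)·( Φ(1)^{s/(1+s)}·Φ(t)^{1/(1+s)} + Φ(1)^{1/(1+s)}·Φ(t)^{s/(1+s)} ) for every t ≥ 0. -/
open Real Set Filter MeasureTheory
open scoped RealInnerProductSpace

/-- An N-function with index `s ≥ 1`: a function `Φ : [0,∞) → [0,∞)` with `Φ(0) = 0`,
strictly increasing and convex, `Φ(t)/t → 0` as `t → 0⁺`, `Φ(t)/t → ∞` as `t → ∞`,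
continuously differentiable on `[0,∞)`, twice continuously differentiable on `(0,∞)`,
and `Φ'(t) > 0` with `(1/s)·Φ'(t) ≤ t·Φ''(t) ≤ s·Φ'(t)` for every `t > 0`. -/
structure IsNFunction (Φ : ℝ → ℝ) (s : ℝ) : Prop where
  s_ge_one : 1 ≤ s
  nonneg : ∀ t, 0 ≤ t → 0 ≤ Φ t
  zero : Φ 0 = 0
  strictMonoOn : StrictMonoOn Φ (Ici 0)
  convexOn : ConvexOn ℝ (Ici 0) Φ
  tendsto_zero : Tendsto (fun t => Φ t / t) (nhdsWithin 0 (Ioi 0)) (nhds 0)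
  tendsto_atTop : Tendsto (fun t => Φ t / t) atTop atTop
  contDiffOn_one : ContDiffOn ℝ 1 Φ (Ici 0)
  contDiffOn_two : ContDiffOn ℝ 2 Φ (Ioi 0)
  deriv_pos : ∀ t, 0 < t → 0 < deriv Φ t
  index_lower : ∀ t, 0 < t → (1 / s) * deriv Φ t ≤ t * deriv (deriv Φ) t
  index_upper : ∀ t, 0 < t → t * deriv (deriv Φ) t ≤ s * deriv Φ t

namespace NFaux

variable {Φ : ℝ → ℝ} {s : ℝ}

lemma diffAt (hΦ : IsNFunction Φ s) {t : ℝ} (ht : 0 < t) : DifferentiableAt ℝ Φ t :=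
  (hΦ.contDiffOn_two.differentiableOn (by norm_num)).differentiableAt
    (isOpen_Ioi.mem_nhds ht)

lemma contDiffOn_deriv (hΦ : IsNFunction Φ s) : ContDiffOn ℝ 1 (deriv Φ) (Ioi 0) := by
  have h2 : ContDiffOn ℝ (1+1 : ℕ) Φ (Ioi 0) := by exact_mod_cast hΦ.contDiffOn_two
  exact ((contDiffOn_succ_iff_deriv_of_isOpen isOpen_Ioi).mp h2).2.2

lemma diffAt_deriv (hΦ : IsNFunction Φ s) {t : ℝ} (ht : 0 < t) :
    DifferentiableAt ℝ (deriv Φ) t :=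
  ((contDiffOn_deriv hΦ).differentiableOn one_ne_zero).differentiableAt (isOpen_Ioi.mem_nhds ht)

lemma cont_deriv (hΦ : IsNFunction Φ s) : ContinuousOn (deriv Φ) (Ioi 0) :=
  (contDiffOn_deriv hΦ).continuousOn

lemma spos (hΦ : IsNFunction Φ s) : 0 < s := lt_of_lt_of_le one_pos hΦ.s_ge_one

lemma phi_pos (hΦ : IsNFunction Φ s) {t : ℝ} (ht : 0 < t) : 0 < Φ t := by
  have := hΦ.strictMonoOn (self_mem_Ici) (le_of_lt ht : (0:ℝ) ≤ t) ht
  rwa [hΦ.zero] at this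

/-- derivative of `fun x => x * deriv Φ x` at `t > 0`. -/
lemma hasDerivAt_mul (hΦ : IsNFunction Φ s) {t : ℝ} (ht : 0 < t) :
    HasDerivAt (fun x => x * deriv Φ x)
      (deriv Φ t + t * deriv (deriv Φ) t) t := by
  have h := (hasDerivAt_id t).mul ((diffAt_deriv hΦ ht).hasDerivAt)
  exact h.congr_deriv (by simp)

/-- `deriv Φ` is strictly monotone on `(0,∞)` (second derivative positive). -/
lemma derivPhi_strictMono (hΦ : IsNFunction Φ s) : StrictMonoOn (deriv Φ) (Ioi 0) := by
  apply strictMonoOn_of_deriv_pos (convex_Ioi 0) (cont_deriv hΦ)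
  intro x hx
  rw [interior_Ioi] at hx
  rw [mem_Ioi] at hx
  have h1 := hΦ.index_lower x hx
  have h2 := hΦ.deriv_pos x hx
  have h3 : 0 < (1 / s) * deriv Φ x := mul_pos (div_pos one_pos (spos hΦ)) h2
  nlinarith

/-- `x * Φ'(x) → 0` as `x → 0⁺`. -/
lemma tendsto_mul_deriv (hΦ : IsNFunction Φ s) :
    Tendsto (fun x => x * deriv Φ x) (nhdsWithin 0 (Ioi 0)) (nhds 0) := by
  have hupper : ∀ᶠ x in nhdsWithin 0 (Ioi 0), x * deriv Φ x ≤ x * deriv Φ 1 := by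
    filter_upwards [Ioo_mem_nhdsGT_of_mem (by norm_num : (0:ℝ) ∈ Ico 0 1)] with x hx
    exact mul_le_mul_of_nonneg_left
      (le_of_lt (derivPhi_strictMono hΦ hx.1 (by norm_num) hx.2)) hx.1.le
  have hlower : ∀ᶠ x in nhdsWithin 0 (Ioi 0), 0 ≤ x * deriv Φ x := by
    filter_upwards [self_mem_nhdsWithin] with x hx
    exact le_of_lt (mul_pos hx (hΦ.deriv_pos x hx))
  have htop : Tendsto (fun x : ℝ => x * deriv Φ 1) (nhdsWithin 0 (Ioi 0)) (nhds 0) := by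
    have : Tendsto (fun x : ℝ => x * deriv Φ 1) (nhds 0) (nhds (0 * deriv Φ 1)) :=
      (continuous_id.mul continuous_const).tendsto 0
    simpa using this.mono_left nhdsWithin_le_nhds
  exact tendsto_of_tendsto_of_tendsto_of_le_of_le' tendsto_const_nhds htop hlower hupper

/-- `Φ(x) → 0` as `x → 0⁺`. -/
lemma tendsto_phi (hΦ : IsNFunction Φ s) :
    Tendsto Φ (nhdsWithin 0 (Ioi 0)) (nhds 0) := by
  have := (hΦ.contDiffOn_one.continuousOn 0 self_mem_Ici).tendsto
  rw [hΦ.zero] at this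
  exact this.mono_left (nhdsWithin_mono 0 Ioi_subset_Ici_self)

/-- Key upper bound: `t Φ'(t) ≤ (1+s) Φ(t)` for `t > 0`. -/
lemma key_upper (hΦ : IsNFunction Φ s) {t : ℝ} (ht : 0 < t) :
    t * deriv Φ t ≤ (1 + s) * Φ t := by
  set g : ℝ → ℝ := fun x => (1 + s) * Φ x - x * deriv Φ x with hg
  have hmono : ∀ a, 0 < a → a ≤ t → g a ≤ g t := by
    intro a ha hat
    have hcont : ContinuousOn g (Icc a t) := by
      apply ContinuousOn.sub
      · exact continuousOn_const.mul ((hΦ.contDiffOn_two.continuousOn).mono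
          (fun x hx => lt_of_lt_of_le ha hx.1))
      · exact continuousOn_id.mul ((cont_deriv hΦ).mono
          (fun x hx => lt_of_lt_of_le ha hx.1))
    have hderiv : ∀ x ∈ interior (Icc a t), HasDerivAt g
        ((1 + s) * deriv Φ x - (deriv Φ x + x * deriv (deriv Φ) x)) x := by
      intro x hx
      rw [interior_Icc] at hx
      have hxpos : 0 < x := lt_trans ha hx.1
      exact (((diffAt hΦ hxpos).hasDerivAt.const_mul _).sub (hasDerivAt_mul hΦ hxpos))
    have := monotoneOn_of_deriv_nonneg (convex_Icc a t) hcont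
      (fun x hx => ((hderiv x hx).differentiableAt.differentiableWithinAt))
      (fun x hx => by
        rw [(hderiv x hx).deriv]
        rw [interior_Icc] at hx
        have hxpos : 0 < x := lt_trans ha hx.1
        have := hΦ.index_upper x hxpos
        nlinarith)
    exact this (left_mem_Icc.mpr hat) (right_mem_Icc.mpr hat) hat
  have hlim : Tendsto g (nhdsWithin 0 (Ioi 0)) (nhds 0) := by
    have := ((tendsto_phi hΦ).const_mul (1 + s)).sub (tendsto_mul_deriv hΦ)
    simpa using this
  have h0 : (0:ℝ) ≤ g t := by
    refine le_of_tendsto hlim ?_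
    filter_upwards [Ioc_mem_nhdsGT_of_mem (mem_Ico.mpr ⟨le_rfl, ht⟩)]
      with a ha
    exact hmono a ha.1 ha.2
  simp only [hg] at h0
  linarith

/-- Key lower bound: `(1 + 1/s) Φ(t) ≤ t Φ'(t)` for `t > 0`. -/
lemma key_lower (hΦ : IsNFunction Φ s) {t : ℝ} (ht : 0 < t) :
    (1 + 1 / s) * Φ t ≤ t * deriv Φ t := by
  set g : ℝ → ℝ := fun x => x * deriv Φ x - (1 + 1 / s) * Φ x with hg
  have hmono : ∀ a, 0 < a → a ≤ t → g a ≤ g t := by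
    intro a ha hat
    have hcont : ContinuousOn g (Icc a t) := by
      apply ContinuousOn.sub
      · exact continuousOn_id.mul ((cont_deriv hΦ).mono
          (fun x hx => lt_of_lt_of_le ha hx.1))
      · exact continuousOn_const.mul ((hΦ.contDiffOn_two.continuousOn).mono
          (fun x hx => lt_of_lt_of_le ha hx.1))
    have hderiv : ∀ x ∈ interior (Icc a t), HasDerivAt g
        ((deriv Φ x + x * deriv (deriv Φ) x) - (1 + 1 / s) * deriv Φ x) x := by
      intro x hx
      rw [interior_Icc] at hx
      have hxpos : 0 < x := lt_trans ha hx.1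
      exact ((hasDerivAt_mul hΦ hxpos).sub ((diffAt hΦ hxpos).hasDerivAt.const_mul _))
    have := monotoneOn_of_deriv_nonneg (convex_Icc a t) hcont
      (fun x hx => ((hderiv x hx).differentiableAt.differentiableWithinAt))
      (fun x hx => by
        rw [(hderiv x hx).deriv]
        rw [interior_Icc] at hx
        have hxpos : 0 < x := lt_trans ha hx.1
        have := hΦ.index_lower x hxpos
        nlinarith)
    exact this (left_mem_Icc.mpr hat) (right_mem_Icc.mpr hat) hat
  have hlim : Tendsto g (nhdsWithin 0 (Ioi 0)) (nhds 0) := by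
    have h := (tendsto_mul_deriv hΦ).sub ((tendsto_phi hΦ).const_mul (1 + 1 / s))
    rw [show (0:ℝ) - (1 + 1 / s) * 0 = 0 by ring] at h
    exact h
  have h0 : (0:ℝ) ≤ g t := by
    refine le_of_tendsto hlim ?_
    filter_upwards [Ioc_mem_nhdsGT_of_mem (mem_Ico.mpr ⟨le_rfl, ht⟩)]
      with a ha
    exact hmono a ha.1 ha.2
  simp only [hg] at h0
  linarith

/-- derivative of `Φ x / x ^ c` for `x > 0`. -/
lemma hasDerivAt_div_rpow (hΦ : IsNFunction Φ s) (c : ℝ) {x : ℝ} (hx : 0 < x) :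
    HasDerivAt (fun y => Φ y / y ^ c)
      ((deriv Φ x * x ^ c - Φ x * (c * x ^ (c - 1))) / (x ^ c) ^ 2) x := by
  exact (diffAt hΦ hx).hasDerivAt.div (Real.hasDerivAt_rpow_const (Or.inl hx.ne'))
    (by positivity)

/-- `Φ(t) ≤ Φ(1) t^{1+s}` for `t ≥ 1`. -/
lemma bound_ge_one (hΦ : IsNFunction Φ s) {t : ℝ} (ht : 1 ≤ t) :
    Φ t ≤ Φ 1 * t ^ (1 + s) := by
  set F : ℝ → ℝ := fun y => Φ y / y ^ (1 + s) with hF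
  have hanti : AntitoneOn F (Icc 1 t) := by
    apply antitoneOn_of_deriv_nonpos (convex_Icc 1 t)
    · apply ContinuousOn.div
      · exact (hΦ.contDiffOn_two.continuousOn).mono
          (fun x hx => lt_of_lt_of_le one_pos hx.1)
      · exact ContinuousOn.rpow_const continuousOn_id
          (fun x hx => Or.inl (ne_of_gt (lt_of_lt_of_le one_pos hx.1)))
      · intro x hx
        have : (0:ℝ) < x := lt_of_lt_of_le one_pos hx.1
        positivity
    · intro x hx
      rw [interior_Icc] at hx
      have hxpos : 0 < x := lt_trans one_pos hx.1
      exact (hasDerivAt_div_rpow hΦ (1 + s) hxpos).differentiableAt.differentiableWithinAt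
    · intro x hx
      rw [interior_Icc] at hx
      have hxpos : 0 < x := lt_trans one_pos hx.1
      rw [(hasDerivAt_div_rpow hΦ (1 + s) hxpos).deriv]
      apply div_nonpos_of_nonpos_of_nonneg _ (by positivity)
      have hkey := key_upper hΦ hxpos
      have he : (1:ℝ) + s - 1 = s := by ring
      rw [he]
      have hsub : x ^ (1 + s) = x * x ^ s := by
        rw [Real.rpow_add hxpos, Real.rpow_one]
      have hrp : (0:ℝ) < x ^ s := Real.rpow_pos_of_pos hxpos _
      rw [hsub]
      nlinarith [mul_le_mul_of_nonneg_right hkey hrp.le]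
  have := hanti (left_mem_Icc.mpr ht) (right_mem_Icc.mpr ht) ht
  have h1 : F 1 = Φ 1 := by simp [hF]
  rw [h1] at this
  have htp : (0:ℝ) < t ^ (1 + s) := Real.rpow_pos_of_pos (lt_of_lt_of_le one_pos ht) _
  calc Φ t = F t * t ^ (1 + s) := by
        rw [hF]; exact (div_mul_cancel₀ _ htp.ne').symm
    _ ≤ Φ 1 * t ^ (1 + s) := mul_le_mul_of_nonneg_right this htp.le

/-- `Φ(t) ≤ Φ(1) t^{1+1/s}` for `0 < t ≤ 1`. -/
lemma bound_le_one (hΦ : IsNFunction Φ s) {t : ℝ} (ht : 0 < t) (ht1 : t ≤ 1) :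
    Φ t ≤ Φ 1 * t ^ (1 + 1 / s) := by
  set F : ℝ → ℝ := fun y => Φ y / y ^ (1 + 1 / s) with hF
  have hmono : MonotoneOn F (Icc t 1) := by
    apply monotoneOn_of_deriv_nonneg (convex_Icc t 1)
    · apply ContinuousOn.div
      · exact (hΦ.contDiffOn_two.continuousOn).mono
          (fun x hx => lt_of_lt_of_le ht hx.1)
      · exact ContinuousOn.rpow_const continuousOn_id
          (fun x hx => Or.inl (ne_of_gt (lt_of_lt_of_le ht hx.1)))
      · intro x hx
        have hxpos : (0:ℝ) < x := lt_of_lt_of_le ht hx.1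
        exact (Real.rpow_pos_of_pos hxpos _).ne'
    · intro x hx
      rw [interior_Icc] at hx
      have hxpos : 0 < x := lt_trans ht hx.1
      exact (hasDerivAt_div_rpow hΦ (1 + 1 / s) hxpos).differentiableAt.differentiableWithinAt
    · intro x hx
      rw [interior_Icc] at hx
      have hxpos : 0 < x := lt_trans ht hx.1
      rw [(hasDerivAt_div_rpow hΦ (1 + 1 / s) hxpos).deriv]
      apply div_nonneg _ (by positivity)
      have hkey := key_lower hΦ hxpos
      have he : (1:ℝ) + 1 / s - 1 = 1 / s := by ring
      rw [he]
      have hsub : x ^ (1 + 1 / s) = x * x ^ (1 / s) := by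
        rw [Real.rpow_add hxpos, Real.rpow_one]
      have hrp : (0:ℝ) < x ^ (1 / s) := Real.rpow_pos_of_pos hxpos _
      rw [hsub]
      nlinarith [mul_le_mul_of_nonneg_right hkey hrp.le]
  have := hmono (left_mem_Icc.mpr ht1) (right_mem_Icc.mpr ht1) ht1
  have h1 : F 1 = Φ 1 := by simp [hF]
  rw [h1] at this
  have htp : (0:ℝ) < t ^ (1 + 1 / s) := Real.rpow_pos_of_pos ht _
  calc Φ t = F t * t ^ (1 + 1 / s) := by
        rw [hF]; exact (div_mul_cancel₀ _ htp.ne').symm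
    _ ≤ Φ 1 * t ^ (1 + 1 / s) := mul_le_mul_of_nonneg_right this htp.le

lemma deriv_zero (hΦ : IsNFunction Φ s) : deriv Φ 0 = 0 := by
  by_cases h : DifferentiableAt ℝ Φ 0
  · have hd : HasDerivWithinAt Φ (deriv Φ 0) (Ioi 0) 0 :=
      h.hasDerivAt.hasDerivWithinAt
    rw [hasDerivWithinAt_iff_tendsto_slope] at hd
    have hs : Ioi (0:ℝ) \ {0} = Ioi 0 := diff_singleton_eq_self (by simp)
    rw [hs] at hd
    have h2 : Tendsto (slope Φ 0) (nhdsWithin 0 (Ioi 0)) (nhds 0) := by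
      refine (hΦ.tendsto_zero).congr' ?_
      filter_upwards [self_mem_nhdsWithin] with x _
      simp [slope_def_field, hΦ.zero]
    exact tendsto_nhds_unique hd h2
  · exact deriv_zero_of_not_differentiableAt h

end NFaux

/-- For an N-function `Φ` with index `s ≥ 1`, `Φ(t)/t ≤ Φ'(t)` for `t > 0`,
and `Φ'(t) ≤ (1+s)·(Φ(1)^{s/(1+s)}·Φ(t)^{1/(1+s)} + Φ(1)^{1/(1+s)}·Φ(t)^{s/(1+s)})` for
`t ≥ 0`. -/
theorem statement5 (Φ : ℝ → ℝ) (s : ℝ) (hΦ : IsNFunction Φ s) :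
    (∀ t : ℝ, 0 < t → Φ t / t ≤ deriv Φ t) ∧
    (∀ t : ℝ, 0 ≤ t →
      deriv Φ t ≤ (1 + s) * (Φ 1 ^ (s / (1 + s)) * Φ t ^ (1 / (1 + s))
        + Φ 1 ^ (1 / (1 + s)) * Φ t ^ (s / (1 + s)))) := by
  have hs := NFaux.spos hΦ
  have hs1 : (0:ℝ) < 1 + s := by linarith
  constructor
  · intro t ht
    have hk := NFaux.key_lower hΦ ht
    have hnn := hΦ.nonneg t ht.le
    have h1s : (0:ℝ) < 1 / s := div_pos one_pos hs
    rw [div_le_iff₀ ht]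
    nlinarith [mul_nonneg h1s.le hnn]
  · intro t ht
    rcases ht.eq_or_lt with h0 | ht
    · subst h0
      rw [NFaux.deriv_zero hΦ, hΦ.zero,
        Real.zero_rpow (div_pos one_pos hs1).ne',
        Real.zero_rpow (div_pos hs hs1).ne']
      simp
    · have hΦt := NFaux.phi_pos hΦ ht
      have hΦ1 := NFaux.phi_pos hΦ one_pos
      have hsplit : Φ t = Φ t ^ (1 / (1 + s)) * Φ t ^ (s / (1 + s)) := by
        rw [← Real.rpow_add hΦt,
          show 1 / (1 + s) + s / (1 + s) = 1 by field_simp, Real.rpow_one]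
      have hkey : deriv Φ t ≤ (1 + s) * (Φ t / t) := by
        rw [← mul_div_assoc, le_div_iff₀ ht]
        nlinarith [NFaux.key_upper hΦ ht]
      rcases le_total 1 t with h1t | ht1
      · have hb := NFaux.bound_ge_one hΦ h1t
        have e1 : Φ t ^ (1 / (1 + s)) ≤ Φ 1 ^ (1 / (1 + s)) * t := by
          calc Φ t ^ (1 / (1 + s)) ≤ (Φ 1 * t ^ (1 + s)) ^ (1 / (1 + s)) :=
                Real.rpow_le_rpow hΦt.le hb (by positivity)
            _ = Φ 1 ^ (1 / (1 + s)) * t := by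
                rw [Real.mul_rpow hΦ1.le (Real.rpow_nonneg ht.le _),
                  ← Real.rpow_mul ht.le, mul_one_div, div_self hs1.ne', Real.rpow_one]
        have e2 : Φ t / t ≤ Φ 1 ^ (1 / (1 + s)) * Φ t ^ (s / (1 + s)) := by
          rw [div_le_iff₀ ht]
          calc Φ t = Φ t ^ (1 / (1 + s)) * Φ t ^ (s / (1 + s)) := hsplit
            _ ≤ (Φ 1 ^ (1 / (1 + s)) * t) * Φ t ^ (s / (1 + s)) :=
                mul_le_mul_of_nonneg_right e1 (Real.rpow_nonneg hΦt.le _)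
            _ = Φ 1 ^ (1 / (1 + s)) * Φ t ^ (s / (1 + s)) * t := by ring
        have hA : (0:ℝ) ≤ Φ 1 ^ (s / (1 + s)) * Φ t ^ (1 / (1 + s)) := by positivity
        calc deriv Φ t ≤ (1 + s) * (Φ t / t) := hkey
          _ ≤ (1 + s) * (Φ 1 ^ (1 / (1 + s)) * Φ t ^ (s / (1 + s))) := by nlinarith
          _ ≤ _ := by nlinarith
      · have hb := NFaux.bound_le_one hΦ ht ht1
        have e1 : Φ t ^ (s / (1 + s)) ≤ Φ 1 ^ (s / (1 + s)) * t := by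
          calc Φ t ^ (s / (1 + s)) ≤ (Φ 1 * t ^ (1 + 1 / s)) ^ (s / (1 + s)) :=
                Real.rpow_le_rpow hΦt.le hb (by positivity)
            _ = Φ 1 ^ (s / (1 + s)) * t := by
                rw [Real.mul_rpow hΦ1.le (Real.rpow_nonneg ht.le _),
                  ← Real.rpow_mul ht.le,
                  show (1 + 1 / s) * (s / (1 + s)) = 1 by field_simp; ring,
                  Real.rpow_one]
        have e2 : Φ t / t ≤ Φ 1 ^ (s / (1 + s)) * Φ t ^ (1 / (1 + s)) := by
          rw [div_le_iff₀ ht]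
          calc Φ t = Φ t ^ (1 / (1 + s)) * Φ t ^ (s / (1 + s)) := hsplit
            _ ≤ Φ t ^ (1 / (1 + s)) * (Φ 1 ^ (s / (1 + s)) * t) :=
                mul_le_mul_of_nonneg_left e1 (Real.rpow_nonneg hΦt.le _)
            _ = Φ 1 ^ (s / (1 + s)) * Φ t ^ (1 / (1 + s)) * t := by ring
        have hB : (0:ℝ) ≤ Φ 1 ^ (1 / (1 + s)) * Φ t ^ (s / (1 + s)) := by positivity
        calc deriv Φ t ≤ (1 + s) * (Φ t / t) := hkey
          _ ≤ (1 + s) * (Φ 1 ^ (s / (1 + s)) * Φ t ^ (1 / (1 + s))) := by nlinarith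
          _ ≤ _ := by nlinarith
end

section
/- Let Φ and Φ̃ be N-functions with indices s(Φ) ≥ 1 and s(Φ̃) ≥ 1 respectively. Then the pointwise product t ↦ Φ(t)·Φ̃(t) is an N-function with index 4·s(Φ)·s(Φ̃)·(s(Φ) + s(Φ̃)). -/
open Real Set Filter MeasureTheory
open scoped RealInnerProductSpace

private lemma nf_pos {Φ : ℝ → ℝ} {s : ℝ} (h : IsNFunction Φ s) {t : ℝ} (ht : 0 < t) :
    0 < Φ t := by
  have := h.strictMonoOn (self_mem_Ici) (mem_Ici.2 ht.le) ht
  rwa [h.zero] at this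

private lemma nf_diffAt {Φ : ℝ → ℝ} {s : ℝ} (h : IsNFunction Φ s) {t : ℝ} (ht : 0 < t) :
    DifferentiableAt ℝ Φ t :=
  (h.contDiffOn_two.contDiffAt (isOpen_Ioi.mem_nhds ht)).differentiableAt (by norm_num)

private lemma nf_deriv_contDiffOn {Φ : ℝ → ℝ} {s : ℝ} (h : IsNFunction Φ s) :
    ContDiffOn ℝ 1 (deriv Φ) (Ioi 0) :=
  h.contDiffOn_two.deriv_of_isOpen isOpen_Ioi (by norm_num)

private lemma nf_deriv_diffAt {Φ : ℝ → ℝ} {s : ℝ} (h : IsNFunction Φ s) {t : ℝ} (ht : 0 < t) :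
    DifferentiableAt ℝ (deriv Φ) t :=
  (((nf_deriv_contDiffOn h).contDiffAt (isOpen_Ioi.mem_nhds ht)).differentiableAt one_ne_zero)

private lemma nf_tendsto_zero {Φ : ℝ → ℝ} {s : ℝ} (h : IsNFunction Φ s) :
    Tendsto Φ (nhdsWithin 0 (Ioi 0)) (nhds 0) := by
  have := (h.contDiffOn_one.continuousOn 0 self_mem_Ici).mono (Ioi_subset_Ici le_rfl)
  rw [ContinuousWithinAt, h.zero] at this
  exact this

/-- Key inequality: `t Φ'(t) ≤ (s+1) Φ(t)`. -/
private lemma nf_key {Φ : ℝ → ℝ} {s : ℝ} (h : IsNFunction Φ s) {t : ℝ} (ht : 0 < t) :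
    t * deriv Φ t ≤ (s + 1) * Φ t := by
  set g : ℝ → ℝ := fun x => (s + 1) * Φ x - x * deriv Φ x with hg
  have hdg : ∀ x ∈ Ioi (0 : ℝ), DifferentiableAt ℝ g x := by
    intro x hx
    exact ((nf_diffAt h hx).const_mul _).sub (differentiableAt_fun_id.mul (nf_deriv_diffAt h hx))
  have hderiv : ∀ x ∈ Ioi (0 : ℝ), deriv g x = s * deriv Φ x - x * deriv (deriv Φ) x := by
    intro x hx
    rw [hg]
    rw [deriv_fun_sub ((nf_diffAt h hx).const_mul _) (differentiableAt_fun_id.fun_mul (nf_deriv_diffAt h hx)),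
      deriv_const_mul _ (nf_diffAt h hx), deriv_fun_mul differentiableAt_fun_id (nf_deriv_diffAt h hx)]
    simp; ring
  have hmono : MonotoneOn g (Ioi 0) := by
    refine monotoneOn_of_deriv_nonneg (convex_Ioi 0)
      (fun x hx => (hdg x hx).continuousAt.continuousWithinAt) ?_ ?_
    · rw [interior_Ioi]; exact fun x hx => (hdg x hx).differentiableWithinAt
    · rw [interior_Ioi]
      intro x hx
      rw [hderiv x hx]
      have := h.index_upper x hx
      linarith
  have hid : Tendsto (fun x : ℝ => x) (nhdsWithin 0 (Ioi 0)) (nhds 0) :=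
    tendsto_id.mono_left nhdsWithin_le_nhds
  have hd0 : Tendsto (fun x => x * deriv Φ x) (nhdsWithin 0 (Ioi 0)) (nhds 0) := by
    have hc : Tendsto (derivWithin Φ (Ici 0)) (nhdsWithin 0 (Ioi 0))
        (nhds (derivWithin Φ (Ici 0) 0)) :=
      ((h.contDiffOn_one.continuousOn_derivWithin (uniqueDiffOn_Ici 0) le_rfl) 0
        self_mem_Ici).mono (Ioi_subset_Ici le_rfl)
    have h1 := hid.mul hc
    rw [zero_mul] at h1
    refine h1.congr' ?_
    filter_upwards [self_mem_nhdsWithin] with x hx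
    rw [derivWithin_of_mem_nhds (Ici_mem_nhds hx)]
  have htend : Tendsto g (nhdsWithin 0 (Ioi 0)) (nhds 0) := by
    have h1 : Tendsto (fun x => (s + 1) * Φ x) (nhdsWithin 0 (Ioi 0)) (nhds ((s + 1) * 0)) :=
      (nf_tendsto_zero h).const_mul _
    simpa [hg] using h1.sub hd0
  have hle : ∀ᶠ x in nhdsWithin 0 (Ioi 0), g x ≤ g t := by
    filter_upwards [Ioo_mem_nhdsGT ht] with x hx
    exact hmono (mem_Ioi.2 hx.1) (mem_Ioi.2 ht) hx.2.le
  have h0 : (0 : ℝ) ≤ g t := le_of_tendsto htend hle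
  rw [hg] at h0; simp only at h0; linarith

private lemma prod_deriv {Φ₁ Φ₂ : ℝ → ℝ} {s₁ s₂ : ℝ} (h₁ : IsNFunction Φ₁ s₁)
    (h₂ : IsNFunction Φ₂ s₂) {t : ℝ} (ht : 0 < t) :
    deriv (fun t => Φ₁ t * Φ₂ t) t = deriv Φ₁ t * Φ₂ t + Φ₁ t * deriv Φ₂ t :=
  deriv_mul (nf_diffAt h₁ ht) (nf_diffAt h₂ ht)

private lemma prod_deriv2 {Φ₁ Φ₂ : ℝ → ℝ} {s₁ s₂ : ℝ} (h₁ : IsNFunction Φ₁ s₁)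
    (h₂ : IsNFunction Φ₂ s₂) {t : ℝ} (ht : 0 < t) :
    deriv (deriv (fun t => Φ₁ t * Φ₂ t)) t =
      deriv (deriv Φ₁) t * Φ₂ t + 2 * (deriv Φ₁ t * deriv Φ₂ t) + Φ₁ t * deriv (deriv Φ₂) t := by
  have heq : deriv (fun t => Φ₁ t * Φ₂ t) =ᶠ[nhds t]
      fun x => deriv Φ₁ x * Φ₂ x + Φ₁ x * deriv Φ₂ x := by
    filter_upwards [isOpen_Ioi.mem_nhds ht] with x hx
    exact prod_deriv h₁ h₂ hx
  rw [heq.deriv_eq,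
    deriv_fun_add ((nf_deriv_diffAt h₁ ht).fun_mul (nf_diffAt h₂ ht))
      ((nf_diffAt h₁ ht).fun_mul (nf_deriv_diffAt h₂ ht)),
    deriv_fun_mul (nf_deriv_diffAt h₁ ht) (nf_diffAt h₂ ht),
    deriv_fun_mul (nf_diffAt h₁ ht) (nf_deriv_diffAt h₂ ht)]
  ring

/-- If `Φ₁, Φ₂` are N-functions with indices `s₁, s₂ ≥ 1`, then the pointwise
product `t ↦ Φ₁(t)·Φ₂(t)` is an N-function with index `4·s₁·s₂·(s₁ + s₂)`. -/
theorem statement7 (Φ₁ Φ₂ : ℝ → ℝ) (s₁ s₂ : ℝ)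
    (hΦ₁ : IsNFunction Φ₁ s₁) (hΦ₂ : IsNFunction Φ₂ s₂) :
    IsNFunction (fun t => Φ₁ t * Φ₂ t) (4 * s₁ * s₂ * (s₁ + s₂)) := by
  have hs₁ := hΦ₁.s_ge_one
  have hs₂ := hΦ₂.s_ge_one
  have h12 : (1:ℝ) ≤ s₁ * s₂ := by nlinarith
  have hS8 : (8:ℝ) ≤ 4 * s₁ * s₂ * (s₁ + s₂) := by nlinarith
  constructor
  · linarith
  · exact fun t ht => mul_nonneg (hΦ₁.nonneg t ht) (hΦ₂.nonneg t ht)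
  · simp [hΦ₁.zero, hΦ₂.zero]
  · intro x hx y hy hxy
    simp only
    rcases eq_or_lt_of_le (mem_Ici.1 hx) with h0 | h0
    · rw [← h0]
      simp only [hΦ₁.zero, hΦ₂.zero, zero_mul]
      have hy' : 0 < y := h0 ▸ hxy
      exact mul_pos (nf_pos hΦ₁ hy') (nf_pos hΦ₂ hy')
    · exact mul_lt_mul (hΦ₁.strictMonoOn hx hy hxy) (hΦ₂.strictMonoOn hx hy hxy).le
        (nf_pos hΦ₂ h0) (hΦ₁.nonneg y (mem_Ici.1 hy))
  · have := hΦ₁.convexOn.mul hΦ₂.convexOn (fun x hx => hΦ₁.nonneg x hx)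
      (fun x hx => hΦ₂.nonneg x hx)
      ((hΦ₁.strictMonoOn.monotoneOn).monovaryOn (hΦ₂.strictMonoOn.monotoneOn))
    simpa [Pi.mul_def] using this
  · have := hΦ₁.tendsto_zero.mul (nf_tendsto_zero hΦ₂)
    rw [zero_mul] at this
    exact this.congr fun t => by rw [mul_div_right_comm]
  · have h2top : Tendsto Φ₂ atTop atTop := by
      refine tendsto_atTop_mono' atTop ?_ tendsto_id
      filter_upwards [hΦ₂.tendsto_atTop.eventually_ge_atTop 1, eventually_gt_atTop 0]
        with t h1 h0
      rw [le_div_iff₀ h0, one_mul] at h1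
      exact h1
    exact (hΦ₁.tendsto_atTop.atTop_mul_atTop₀ h2top).congr fun t => by rw [mul_div_right_comm]
  · exact hΦ₁.contDiffOn_one.mul hΦ₂.contDiffOn_one
  · exact hΦ₁.contDiffOn_two.mul hΦ₂.contDiffOn_two
  · intro t ht
    rw [prod_deriv hΦ₁ hΦ₂ ht]
    have := nf_pos hΦ₁ ht; have := nf_pos hΦ₂ ht
    have := hΦ₁.deriv_pos t ht; have := hΦ₂.deriv_pos t ht
    positivity
  · intro t ht
    rw [prod_deriv2 hΦ₁ hΦ₂ ht, prod_deriv hΦ₁ hΦ₂ ht]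
    set a := deriv Φ₁ t; set b := deriv Φ₂ t
    set A := Φ₁ t; set B := Φ₂ t
    set a' := deriv (deriv Φ₁) t; set b' := deriv (deriv Φ₂) t
    have hA : 0 < A := nf_pos hΦ₁ ht
    have hB : 0 < B := nf_pos hΦ₂ ht
    have ha : 0 < a := hΦ₁.deriv_pos t ht
    have hb : 0 < b := hΦ₂.deriv_pos t ht
    have l1 := hΦ₁.index_lower t ht
    have l2 := hΦ₂.index_lower t ht
    have hS : (0 : ℝ) < 4 * s₁ * s₂ * (s₁ + s₂) := by linarith
    have hs1 : (0 : ℝ) < s₁ := by linarith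
    have hs2 : (0 : ℝ) < s₂ := by linarith
    have h1S : 1 / (4 * s₁ * s₂ * (s₁ + s₂)) ≤ 1 / s₁ := by
      apply one_div_le_one_div_of_le hs1; nlinarith [h12, hs₁, hs₂]
    have h2S : 1 / (4 * s₁ * s₂ * (s₁ + s₂)) ≤ 1 / s₂ := by
      apply one_div_le_one_div_of_le hs2; nlinarith [h12, hs₁, hs₂]
    have E1 : 1 / (4 * s₁ * s₂ * (s₁ + s₂)) * (a * B) ≤ t * a' * B := by
      calc 1 / (4 * s₁ * s₂ * (s₁ + s₂)) * (a * B) ≤ 1 / s₁ * (a * B) :=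
            mul_le_mul_of_nonneg_right h1S (by positivity)
        _ = (1 / s₁ * a) * B := by ring
        _ ≤ t * a' * B := mul_le_mul_of_nonneg_right l1 hB.le
    have E2 : 1 / (4 * s₁ * s₂ * (s₁ + s₂)) * (A * b) ≤ A * (t * b') := by
      calc 1 / (4 * s₁ * s₂ * (s₁ + s₂)) * (A * b) ≤ 1 / s₂ * (A * b) :=
            mul_le_mul_of_nonneg_right h2S (by positivity)
        _ = A * (1 / s₂ * b) := by ring
        _ ≤ A * (t * b') := mul_le_mul_of_nonneg_left l2 hA.le
    nlinarith [mul_nonneg (mul_nonneg ht.le ha.le) hb.le]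
  · intro t ht
    rw [prod_deriv2 hΦ₁ hΦ₂ ht, prod_deriv hΦ₁ hΦ₂ ht]
    set a := deriv Φ₁ t; set b := deriv Φ₂ t
    set A := Φ₁ t; set B := Φ₂ t
    set a' := deriv (deriv Φ₁) t; set b' := deriv (deriv Φ₂) t
    have hA : 0 < A := nf_pos hΦ₁ ht
    have hB : 0 < B := nf_pos hΦ₂ ht
    have ha : 0 < a := hΦ₁.deriv_pos t ht
    have hb : 0 < b := hΦ₂.deriv_pos t ht
    have u1 := hΦ₁.index_upper t ht
    have u2 := hΦ₂.index_upper t ht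
    have k2 : t * b ≤ (s₂ + 1) * B := nf_key hΦ₂ ht
    have F1 : t * a' * B ≤ s₁ * a * B := mul_le_mul_of_nonneg_right u1 hB.le
    have F2 : A * (t * b') ≤ A * (s₂ * b) := mul_le_mul_of_nonneg_left u2 hA.le
    have F3 : a * (t * b) ≤ a * ((s₂ + 1) * B) := mul_le_mul_of_nonneg_left k2 ha.le
    have hc1 : s₁ + 2 * s₂ + 2 ≤ 4 * s₁ * s₂ * (s₁ + s₂) := by nlinarith [h12, hs₁, hs₂]
    have hc2 : s₂ ≤ 4 * s₁ * s₂ * (s₁ + s₂) := by nlinarith [h12, hs₁, hs₂]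
    nlinarith [F1, F2, F3, hc1, hc2, mul_pos ha hB, mul_pos hA hb]
end

section
/- Let Φ be an N-function with index s ≥ 1 and let m ≥ 1 be a real number. Then the function t ↦ (Φ(t))^m is an N-function with index s + (m−1)·(s+1). -/
open Real Set Filter MeasureTheory
open scoped RealInnerProductSpace

/-- A monotone function on `(0,∞)` tending to `0` at `0⁺` is nonnegative. -/
lemma aux_nonneg_of_mono_tendsto {H : ℝ → ℝ} (hmono : MonotoneOn H (Ioi 0))
    (htend : Tendsto H (nhdsWithin 0 (Ioi 0)) (nhds 0)) {t : ℝ} (ht : 0 < t) : 0 ≤ H t := by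
  refine le_of_tendsto htend ?_
  filter_upwards [Ioc_mem_nhdsGT_of_mem (⟨le_rfl, ht⟩ : (0:ℝ) ∈ Ico 0 t)] with u hu
  exact hmono hu.1 ht hu.2

/-- If `Φ` is an N-function with index `s ≥ 1` and `m ≥ 1` is real, then
`t ↦ Φ(t)^m` is an N-function with index `s + (m−1)·(s+1)`. -/
theorem statement8 (Φ : ℝ → ℝ) (s : ℝ) (hΦ : IsNFunction Φ s) (m : ℝ) (hm : 1 ≤ m) :
    IsNFunction (fun t => Φ t ^ m) (s + (m - 1) * (s + 1)) := by
  obtain ⟨hs, hnn, hz, hsm, hcv, htz, hta, hc1, hc2, hdp, hil, hiu⟩ := hΦ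
  have hs0 : 0 < s := lt_of_lt_of_le one_pos hs
  have hm0 : 0 < m := lt_of_lt_of_le one_pos hm
  have hΦpos : ∀ t, 0 < t → 0 < Φ t := fun t ht => by
    have := hsm (mem_Ici.2 le_rfl) (mem_Ici.2 ht.le) ht
    rwa [hz] at this
  -- basic differentiability facts on (0,∞)
  have hd1 : ∀ t, 0 < t → HasDerivAt Φ (deriv Φ t) t := fun t ht =>
    ((hc2.differentiableOn two_ne_zero).differentiableAt (Ioi_mem_nhds ht)).hasDerivAt
  have hcd1' : ContDiffOn ℝ 1 (deriv Φ) (Ioi 0) := hc2.deriv_of_isOpen isOpen_Ioi le_rfl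
  have hd2 : ∀ t, 0 < t → HasDerivAt (deriv Φ) (deriv (deriv Φ) t) t := fun t ht =>
    ((hcd1'.differentiableOn one_ne_zero).differentiableAt (Ioi_mem_nhds ht)).hasDerivAt
  -- continuity facts at 0⁺
  have hΦt0 : Tendsto Φ (nhdsWithin 0 (Ioi 0)) (nhds 0) := by
    have h := (hc1.continuousOn 0 (mem_Ici.2 le_rfl)).tendsto
    rw [hz] at h
    exact h.mono_left (nhdsWithin_mono 0 Ioi_subset_Ici_self)
  have htd0 : Tendsto (fun u => u * deriv Φ u) (nhdsWithin 0 (Ioi 0)) (nhds 0) := by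
    have hc1' : ContDiffOn ℝ (0 + 1 : ℕ) Φ (Ici 0) := by exact_mod_cast hc1
    have hD : ContinuousOn (derivWithin Φ (Ici 0)) (Ici 0) :=
      contDiffOn_zero.1 ((contDiffOn_succ_iff_derivWithin (uniqueDiffOn_Ici 0)).1 hc1').2.2
    have h0 : Tendsto (fun u => u * derivWithin Φ (Ici 0) u) (nhdsWithin 0 (Ici 0))
        (nhds (0 * derivWithin Φ (Ici 0) 0)) :=
      (continuousWithinAt_id.mul (hD 0 (mem_Ici.2 le_rfl))).tendsto
    rw [zero_mul] at h0
    have h0' := h0.mono_left (nhdsWithin_mono 0 Ioi_subset_Ici_self)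
    refine h0'.congr' ?_
    filter_upwards [self_mem_nhdsWithin] with u hu
    rw [derivWithin_of_mem_nhds (mem_of_superset (Ioi_mem_nhds hu) Ioi_subset_Ici_self)]
  -- key inequality 1 : t Φ'(t) ≤ (s+1) Φ(t)
  have key1 : ∀ t, 0 < t → t * deriv Φ t ≤ (s + 1) * Φ t := by
    intro t ht
    set H : ℝ → ℝ := fun u => (s + 1) * Φ u - u * deriv Φ u with hH
    have hHd : ∀ u ∈ Ioi (0:ℝ), HasDerivAt H
        ((s + 1) * deriv Φ u - (1 * deriv Φ u + u * deriv (deriv Φ) u)) u := fun u hu =>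
      ((hd1 u hu).const_mul (s + 1)).sub ((hasDerivAt_id u).mul (hd2 u hu))
    have hmono : MonotoneOn H (Ioi 0) := by
      apply monotoneOn_of_deriv_nonneg (convex_Ioi 0)
      · exact fun u hu => (hHd u hu).continuousAt.continuousWithinAt
      · rw [interior_Ioi]
        exact fun u hu => (hHd u hu).differentiableAt.differentiableWithinAt
      · rw [interior_Ioi]
        intro u hu
        rw [(hHd u hu).deriv]
        have := hiu u hu
        nlinarith [hdp u hu]
    have htend : Tendsto H (nhdsWithin 0 (Ioi 0)) (nhds 0) := by
      have := ((hΦt0.const_mul (s + 1)).sub htd0)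
      simpa using this
    have := aux_nonneg_of_mono_tendsto hmono htend ht
    simp only [hH] at this
    linarith
  -- key inequality 2 : (1 + 1/s) Φ(t) ≤ t Φ'(t)
  have key2 : ∀ t, 0 < t → (1 + 1 / s) * Φ t ≤ t * deriv Φ t := by
    intro t ht
    set K : ℝ → ℝ := fun u => u * deriv Φ u - (1 + 1 / s) * Φ u with hK
    have hKd : ∀ u ∈ Ioi (0:ℝ), HasDerivAt K
        ((1 * deriv Φ u + u * deriv (deriv Φ) u) - (1 + 1 / s) * deriv Φ u) u := fun u hu =>
      ((hasDerivAt_id u).mul (hd2 u hu)).sub ((hd1 u hu).const_mul (1 + 1 / s))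
    have hmono : MonotoneOn K (Ioi 0) := by
      apply monotoneOn_of_deriv_nonneg (convex_Ioi 0)
      · exact fun u hu => (hKd u hu).continuousAt.continuousWithinAt
      · rw [interior_Ioi]
        exact fun u hu => (hKd u hu).differentiableAt.differentiableWithinAt
      · rw [interior_Ioi]
        intro u hu
        rw [(hKd u hu).deriv]
        have := hil u hu
        nlinarith [hdp u hu]
    have htend : Tendsto K (nhdsWithin 0 (Ioi 0)) (nhds 0) := by
      have h := htd0.sub (hΦt0.const_mul (1 + 1 / s))
      have he : (0:ℝ) - (1 + 1 / s) * 0 = 0 := by ring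
      rw [he] at h
      exact h
    have := aux_nonneg_of_mono_tendsto hmono htend ht
    simp only [hK] at this
    linarith
  -- derivative of Ψ
  have hΨd : ∀ t, 0 < t →
      HasDerivAt (fun u => Φ u ^ m) (deriv Φ t * m * Φ t ^ (m - 1)) t := fun t ht =>
    (hd1 t ht).rpow_const (Or.inl (hΦpos t ht).ne')
  have hΨderiv : ∀ t, 0 < t →
      deriv (fun u => Φ u ^ m) t = deriv Φ t * m * Φ t ^ (m - 1) := fun t ht =>
    (hΨd t ht).deriv
  -- second derivative of Ψ
  have hΨd2 : ∀ t, 0 < t →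
      deriv (deriv (fun u => Φ u ^ m)) t =
        deriv (deriv Φ) t * m * Φ t ^ (m - 1) +
          deriv Φ t * m * (deriv Φ t * (m - 1) * Φ t ^ (m - 1 - 1)) := by
    intro t ht
    have hev : deriv (fun u => Φ u ^ m) =ᶠ[nhds t]
        fun u => deriv Φ u * m * Φ u ^ (m - 1) := by
      filter_upwards [Ioi_mem_nhds ht] with u hu
      exact hΨderiv u hu
    rw [hev.deriv_eq]
    have hg : HasDerivAt (fun u => deriv Φ u * m * Φ u ^ (m - 1))
        (deriv (deriv Φ) t * m * Φ t ^ (m - 1) +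
          deriv Φ t * m * (deriv Φ t * (m - 1) * Φ t ^ (m - 1 - 1))) t :=
      ((hd2 t ht).mul_const m).mul ((hd1 t ht).rpow_const (Or.inl (hΦpos t ht).ne'))
    exact hg.deriv
  constructor
  · nlinarith
  · exact fun t ht => Real.rpow_nonneg (hnn t ht) m
  · rw [hz]; exact Real.zero_rpow hm0.ne'
  · intro x hx y hy hxy
    exact Real.rpow_lt_rpow (hnn x hx) (hsm hx hy hxy) hm0
  · refine ⟨convex_Ici 0, fun x hx y hy a b ha hb hab => ?_⟩
    simp only [smul_eq_mul]
    have hx' : (0:ℝ) ≤ x := hx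
    have hy' : (0:ℝ) ≤ y := hy
    have hxy0 : (0:ℝ) ≤ a * x + b * y := by positivity
    have h1 : Φ (a * x + b * y) ≤ a * Φ x + b * Φ y := by
      have := hcv.2 hx hy ha hb hab
      simpa using this
    have h2 : Φ (a * x + b * y) ^ m ≤ (a * Φ x + b * Φ y) ^ m :=
      Real.rpow_le_rpow (hnn _ hxy0) h1 hm0.le
    have h3 : (a * Φ x + b * Φ y) ^ m ≤ a * Φ x ^ m + b * Φ y ^ m := by
      have := (convexOn_rpow hm).2 (mem_Ici.2 (hnn x hx'))
        (mem_Ici.2 (hnn y hy')) ha hb hab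
      simpa using this
    exact h2.trans h3
  · -- tendsto at 0⁺
    have hlim : Tendsto (fun t => (Φ t / t) ^ m) (nhdsWithin 0 (Ioi 0)) (nhds 0) := by
      have hca : ContinuousAt (fun x : ℝ => x ^ m) 0 :=
        Real.continuousAt_rpow_const 0 m (Or.inr hm0.le)
      have h := hca.tendsto.comp htz
      simpa [Function.comp_def, Real.zero_rpow hm0.ne'] using h
    apply tendsto_of_tendsto_of_tendsto_of_le_of_le' tendsto_const_nhds hlim
    · filter_upwards [self_mem_nhdsWithin] with t ht
      exact div_nonneg (Real.rpow_nonneg (hnn t (le_of_lt ht)) m) (le_of_lt ht)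
    · filter_upwards [Ioc_mem_nhdsGT_of_mem (⟨le_rfl, one_pos⟩ : (0:ℝ) ∈ Ico 0 1)] with t ht
      rw [Real.div_rpow (hnn t ht.1.le) ht.1.le]
      have htm : t ^ m ≤ t := by
        have := Real.rpow_le_rpow_of_exponent_ge ht.1 ht.2 hm
        rwa [Real.rpow_one] at this
      gcongr
      · exact Real.rpow_nonneg (hnn t ht.1.le) m
      · exact Real.rpow_pos_of_pos ht.1 m
  · -- tendsto at ∞
    apply tendsto_atTop_mono' atTop ?_ hta
    filter_upwards [hta.eventually_ge_atTop 1, eventually_ge_atTop (1:ℝ)] with t h1 h2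
    have ht : (0:ℝ) < t := lt_of_lt_of_le one_pos h2
    rw [le_div_iff₀ ht, one_mul] at h1
    have hΦ1 : 1 ≤ Φ t := le_trans h2 h1
    have hle : Φ t ≤ Φ t ^ m := by
      have := Real.rpow_le_rpow_of_exponent_le hΦ1 hm
      rwa [Real.rpow_one] at this
    exact div_le_div_of_nonneg_right hle ht.le
  · -- C¹ on [0,∞)
    have haux : ContDiff ℝ (1:ℕ) (fun x : ℝ => x ^ m) :=
      Real.contDiff_rpow_const_of_le (by exact_mod_cast hm)
    exact (haux.of_le (by exact_mod_cast le_rfl)).comp_contDiffOn hc1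
  · -- C² on (0,∞)
    have haux : ContDiffOn ℝ 2 (fun x : ℝ => x ^ m) (Ioi 0) := fun x hx =>
      (Real.contDiffAt_rpow_const_of_ne (ne_of_gt hx)).contDiffWithinAt
    exact haux.comp hc2 fun t ht => mem_Ioi.2 (hΦpos t ht)
  · intro t ht
    rw [hΨderiv t ht]
    exact mul_pos (mul_pos (hdp t ht) hm0) (Real.rpow_pos_of_pos (hΦpos t ht) _)
  · -- lower index bound
    intro t ht
    rw [hΨderiv t ht, hΨd2 t ht]
    have ha0 : 0 < Φ t := hΦpos t ht
    have hb0 : 0 < deriv Φ t := hdp t ht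
    have hB : (0:ℝ) < Φ t ^ (m - 1 - 1) := Real.rpow_pos_of_pos ha0 _
    have hsplit : Φ t ^ (m - 1 - 1) * Φ t = Φ t ^ (m - 1) := by
      rw [← Real.rpow_add_one ha0.ne']
      ring_nf
    rw [← hsplit]
    have h1 := hil t ht
    have h2 := key2 t ht
    have hA' : (0:ℝ) ≤ (m - 1) * (s + 1) := by nlinarith
    have hs' : (0:ℝ) < s + (m - 1) * (s + 1) := by nlinarith
    have hcoef : 1 / (s + (m - 1) * (s + 1)) ≤ 1 / s + (1 + 1 / s) * (m - 1) := by
      have hCe : 1 / s + (1 + 1 / s) * (m - 1) = (1 + (m - 1) * (s + 1)) / s := by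
        field_simp
      rw [hCe, div_le_div_iff₀ hs' hs0]
      nlinarith
    calc 1 / (s + (m - 1) * (s + 1)) * (deriv Φ t * m * (Φ t ^ (m - 1 - 1) * Φ t))
        ≤ (1 / s + (1 + 1 / s) * (m - 1)) * (deriv Φ t * m * (Φ t ^ (m - 1 - 1) * Φ t)) := by
          apply mul_le_mul_of_nonneg_right hcoef
          positivity
      _ = (1 / s * deriv Φ t) * (m * (Φ t ^ (m - 1 - 1) * Φ t)) +
            ((1 + 1 / s) * Φ t) * (m * (m - 1) * deriv Φ t * Φ t ^ (m - 1 - 1)) := by ring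
      _ ≤ (t * deriv (deriv Φ) t) * (m * (Φ t ^ (m - 1 - 1) * Φ t)) +
            (t * deriv Φ t) * (m * (m - 1) * deriv Φ t * Φ t ^ (m - 1 - 1)) := by
          apply add_le_add
          · apply mul_le_mul_of_nonneg_right h1
            positivity
          · apply mul_le_mul_of_nonneg_right h2
            have hm1 : (0:ℝ) ≤ m - 1 := by linarith
            positivity
      _ = t * (deriv (deriv Φ) t * m * (Φ t ^ (m - 1 - 1) * Φ t) +
            deriv Φ t * m * (deriv Φ t * (m - 1) * Φ t ^ (m - 1 - 1))) := by ring
  · -- upper index bound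
    intro t ht
    rw [hΨderiv t ht, hΨd2 t ht]
    have ha0 : 0 < Φ t := hΦpos t ht
    have hb0 : 0 < deriv Φ t := hdp t ht
    have hB : (0:ℝ) < Φ t ^ (m - 1 - 1) := Real.rpow_pos_of_pos ha0 _
    have hsplit : Φ t ^ (m - 1 - 1) * Φ t = Φ t ^ (m - 1) := by
      rw [← Real.rpow_add_one ha0.ne']
      ring_nf
    rw [← hsplit]
    have h1 := hiu t ht
    have h2 := key1 t ht
    calc t * (deriv (deriv Φ) t * m * (Φ t ^ (m - 1 - 1) * Φ t) +
            deriv Φ t * m * (deriv Φ t * (m - 1) * Φ t ^ (m - 1 - 1)))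
        = (t * deriv (deriv Φ) t) * (m * (Φ t ^ (m - 1 - 1) * Φ t)) +
            (t * deriv Φ t) * (m * (m - 1) * deriv Φ t * Φ t ^ (m - 1 - 1)) := by ring
      _ ≤ (s * deriv Φ t) * (m * (Φ t ^ (m - 1 - 1) * Φ t)) +
            ((s + 1) * Φ t) * (m * (m - 1) * deriv Φ t * Φ t ^ (m - 1 - 1)) := by
          apply add_le_add
          · apply mul_le_mul_of_nonneg_right h1
            positivity
          · apply mul_le_mul_of_nonneg_right h2
            have hm1 : (0:ℝ) ≤ m - 1 := by linarith
            positivity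
      _ = (s + (m - 1) * (s + 1)) * (deriv Φ t * m * (Φ t ^ (m - 1 - 1) * Φ t)) := by ring
end

section
/- Let Φ be an N-function with index s ≥ 1 and let μ ≥ 0 be a real number. Then the function Φ_μ(t) := t^μ·Φ(t) is an N-function with index μ + 3·s². -/
open Real Set Filter MeasureTheory
open scoped RealInnerProductSpace

namespace NFunAux

variable {Φ : ℝ → ℝ} {s : ℝ}

lemma phi_pos (hΦ : IsNFunction Φ s) {t : ℝ} (ht : 0 < t) : 0 < Φ t := by
  have := hΦ.strictMonoOn self_mem_Ici (mem_Ici.2 ht.le) ht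
  rwa [hΦ.zero] at this

lemma diffAt (hΦ : IsNFunction Φ s) {t : ℝ} (ht : 0 < t) : DifferentiableAt ℝ Φ t :=
  (hΦ.contDiffOn_two.contDiffAt (isOpen_Ioi.mem_nhds ht)).differentiableAt two_ne_zero

lemma deriv_contDiffOn (hΦ : IsNFunction Φ s) : ContDiffOn ℝ 1 (deriv Φ) (Ioi 0) :=
  hΦ.contDiffOn_two.deriv_of_isOpen isOpen_Ioi (by norm_num)

lemma deriv_diffAt (hΦ : IsNFunction Φ s) {t : ℝ} (ht : 0 < t) :
    DifferentiableAt ℝ (deriv Φ) t :=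
  ((deriv_contDiffOn hΦ).contDiffAt (isOpen_Ioi.mem_nhds ht)).differentiableAt one_ne_zero

lemma psi_continuousOn (hΦ : IsNFunction Φ s) :
    ContinuousOn (derivWithin Φ (Ici 0)) (Ici 0) := by
  have h := (contDiffOn_succ_iff_derivWithin (n := 0) (uniqueDiffOn_Ici 0)).1
    (by simpa using hΦ.contDiffOn_one)
  exact h.2.2.continuousOn

lemma psi_eq_deriv {t : ℝ} (ht : 0 < t) : derivWithin Φ (Ici 0) t = deriv Φ t :=
  derivWithin_of_mem_nhds (Ici_mem_nhds ht)

lemma psi_zero (hΦ : IsNFunction Φ s) : derivWithin Φ (Ici 0) 0 = 0 := by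
  have hd : HasDerivWithinAt Φ 0 (Ici 0) 0 := by
    rw [hasDerivWithinAt_iff_tendsto_slope, Ici_sdiff_left]
    apply Tendsto.congr' _ hΦ.tendsto_zero
    filter_upwards [self_mem_nhdsWithin] with u (hu : u ∈ Ioi (0:ℝ))
    rw [slope_def_field, hΦ.zero]
    ring
  exact hd.derivWithin (uniqueDiffOn_Ici 0 0 self_mem_Ici)

lemma key (hΦ : IsNFunction Φ s) (c₁ c₂ : ℝ)
    (h : ∀ x : ℝ, 0 < x →
      0 ≤ c₁ * deriv Φ x + c₂ * (deriv Φ x + x * deriv (deriv Φ) x)) :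
    ∀ t : ℝ, 0 < t → 0 ≤ c₁ * Φ t + c₂ * (t * deriv Φ t) := by
  set F : ℝ → ℝ := fun u => c₁ * Φ u + c₂ * (u * derivWithin Φ (Ici 0) u) with hF
  have hform : ∀ x : ℝ, 0 < x →
      F =ᶠ[nhds x] fun u => c₁ * Φ u + c₂ * (u * deriv Φ u) := by
    intro x hx
    filter_upwards [isOpen_Ioi.mem_nhds hx] with u (hu : u ∈ Ioi (0:ℝ))
    simp only [hF, psi_eq_deriv hu]
  have hcont : ContinuousOn F (Ici 0) :=
    (continuousOn_const.mul hΦ.contDiffOn_one.continuousOn).add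
      (continuousOn_const.mul (continuousOn_id.mul (psi_continuousOn hΦ)))
  have hmono : MonotoneOn F (Ici 0) := by
    apply monotoneOn_of_deriv_nonneg (convex_Ici 0) hcont
    · rw [interior_Ici]
      intro x hx
      have hx' : (0:ℝ) < x := hx
      have hdx : DifferentiableAt ℝ (fun u => c₁ * Φ u + c₂ * (u * deriv Φ u)) x :=
        ((diffAt hΦ hx').const_mul c₁).add
          ((differentiableAt_id.mul (deriv_diffAt hΦ hx')).const_mul c₂)
      exact ((hform x hx').differentiableAt_iff.2 hdx).differentiableWithinAt
    · rw [interior_Ici]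
      intro x hx
      have hx' : (0:ℝ) < x := hx
      rw [(hform x hx').deriv_eq]
      have h1 : HasDerivAt (fun u => c₁ * Φ u + c₂ * (u * deriv Φ u))
          (c₁ * deriv Φ x + c₂ * (1 * deriv Φ x + x * deriv (deriv Φ) x)) x := by
        exact ((diffAt hΦ hx').hasDerivAt.const_mul c₁).add
          (((hasDerivAt_id x).mul (deriv_diffAt hΦ hx').hasDerivAt).const_mul c₂)
      rw [h1.deriv]
      have := h x hx'
      linarith
  intro t ht
  have h0 : F 0 = 0 := by simp [hF, hΦ.zero]
  have := hmono self_mem_Ici (mem_Ici.2 ht.le) ht.le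
  rw [h0] at this
  simpa [hF, psi_eq_deriv ht] using this

lemma slope_le (hΦ : IsNFunction Φ s) {t : ℝ} (ht : 0 < t) : Φ t ≤ t * deriv Φ t := by
  have hs0 : (0:ℝ) < s := lt_of_lt_of_le one_pos hΦ.s_ge_one
  have := key hΦ (-1) 1 (fun x hx => by
    have h1 := hΦ.index_lower x hx
    have h2 := hΦ.deriv_pos x hx
    have h3 : 0 < (1/s) * deriv Φ x := by positivity
    linarith) t ht
  linarith

lemma le_slope (hΦ : IsNFunction Φ s) {t : ℝ} (ht : 0 < t) :
    t * deriv Φ t ≤ (s + 1) * Φ t := by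
  have := key hΦ (s+1) (-1) (fun x hx => by
    have h1 := hΦ.index_upper x hx
    linarith) t ht
  linarith

end NFunAux

set_option maxHeartbeats 2000000 in
open NFunAux in
/-- If `Φ` is an N-function with index `s ≥ 1` and `μ ≥ 0` is real, then
`Φ_μ(t) := t^μ·Φ(t)` is an N-function with index `μ + 3·s²`. -/
theorem statement9 (Φ : ℝ → ℝ) (s : ℝ) (hΦ : IsNFunction Φ s) (μ : ℝ) (hμ : 0 ≤ μ) :
    IsNFunction (fun t => t ^ μ * Φ t) (μ + 3 * s ^ 2) := by
  have hs1 : 1 ≤ s := hΦ.s_ge_one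
  have hs0 : (0:ℝ) < s := by linarith
  have hS0 : (0:ℝ) < μ + 3 * s ^ 2 := by nlinarith
  -- first derivative
  have hgd : ∀ t : ℝ, 0 < t → HasDerivAt (fun u => u ^ μ * Φ u)
      (μ * t ^ (μ - 1) * Φ t + t ^ μ * deriv Φ t) t := fun t ht =>
    (Real.hasDerivAt_rpow_const (Or.inl ht.ne')).mul (diffAt hΦ ht).hasDerivAt
  have hgderiv : ∀ t : ℝ, 0 < t → deriv (fun u => u ^ μ * Φ u) t =
      μ * t ^ (μ - 1) * Φ t + t ^ μ * deriv Φ t := fun t ht => (hgd t ht).deriv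
  -- second derivative
  have hgd2 : ∀ t : ℝ, 0 < t → deriv (deriv (fun u => u ^ μ * Φ u)) t =
      μ * (μ-1) * t ^ (μ-2) * Φ t + 2 * μ * t ^ (μ-1) * deriv Φ t
        + t ^ μ * deriv (deriv Φ) t := by
    intro t ht
    have hev : deriv (fun u => u ^ μ * Φ u) =ᶠ[nhds t]
        fun u => μ * u ^ (μ - 1) * Φ u + u ^ μ * deriv Φ u := by
      filter_upwards [isOpen_Ioi.mem_nhds ht] with u (hu : u ∈ Ioi (0:ℝ))
      exact hgderiv u hu
    rw [hev.deriv_eq]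
    have h3 : HasDerivAt (fun u : ℝ => μ * u ^ (μ-1) * Φ u + u ^ μ * deriv Φ u)
        ((μ * ((μ-1) * t ^ (μ-1-1)) * Φ t + μ * t ^ (μ-1) * deriv Φ t)
          + (μ * t ^ (μ-1) * deriv Φ t + t ^ μ * deriv (deriv Φ) t)) t := by
      exact (((Real.hasDerivAt_rpow_const (Or.inl ht.ne')).const_mul μ).mul
          (diffAt hΦ ht).hasDerivAt).add
        ((Real.hasDerivAt_rpow_const (Or.inl ht.ne')).mul
          (deriv_diffAt hΦ ht).hasDerivAt)
    rw [h3.deriv, show μ - 1 - 1 = μ - 2 by ring]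
    ring
  -- scalar inequalities
  have hABC : ∀ t : ℝ, 0 < t →
      Φ t ≤ t * deriv Φ t ∧ t * deriv Φ t ≤ (s+1) * Φ t ∧
      t * deriv Φ t ≤ s * (t * (t * deriv (deriv Φ) t)) ∧
      t * (t * deriv (deriv Φ) t) ≤ s * (t * deriv Φ t) := by
    intro t ht
    have h1 := hΦ.index_lower t ht
    have h2 := hΦ.index_upper t ht
    refine ⟨slope_le hΦ ht, le_slope hΦ ht, ?_, ?_⟩
    · have h1' : deriv Φ t ≤ s * (t * deriv (deriv Φ) t) := by
        have h := mul_le_mul_of_nonneg_left h1 hs0.le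
        have e : s * (1 / s * deriv Φ t) = deriv Φ t := by field_simp
        linarith
      nlinarith [mul_le_mul_of_nonneg_left h1' ht.le]
    · nlinarith [mul_le_mul_of_nonneg_left h2 ht.le]
  -- core polynomial inequalities
  have hcore : ∀ t : ℝ, 0 < t →
      0 ≤ μ*(μ-1)*Φ t + 2*μ*(t*deriv Φ t) + t*(t*deriv (deriv Φ) t) ∧
      μ*(μ-1)*Φ t + 2*μ*(t*deriv Φ t) + t*(t*deriv (deriv Φ) t)
        ≤ (μ + 3*s^2) * (μ * Φ t + t * deriv Φ t) ∧
      μ * Φ t + t * deriv Φ t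
        ≤ (μ + 3*s^2) * (μ*(μ-1)*Φ t + 2*μ*(t*deriv Φ t) + t*(t*deriv (deriv Φ) t)) := by
    intro t ht
    obtain ⟨hAB, hBA, hBC, hCB⟩ := hABC t ht
    set A := Φ t with hA
    set B := t * deriv Φ t with hB
    set C := t * (t * deriv (deriv Φ) t) with hC
    have hA0 : 0 < A := phi_pos hΦ ht
    have hB0 : 0 < B := mul_pos ht (hΦ.deriv_pos t ht)
    have hC0 : 0 < C := by nlinarith [hBC, hB0, hs0]
    refine ⟨?_, ?_, ?_⟩
    · nlinarith [mul_nonneg (mul_self_nonneg μ) hA0.le,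
        mul_nonneg hμ (sub_nonneg.2 hAB), mul_nonneg hμ hB0.le, hC0.le]
    · have h1 : B ≤ (3*s^2+1)*A := by
        nlinarith [hBA, mul_nonneg (show (0:ℝ) ≤ 3*s^2 - s by nlinarith) hA0.le]
      nlinarith [mul_nonneg hμ (sub_nonneg.2 h1),
        mul_nonneg (show (0:ℝ) ≤ 3*s^2 - s by nlinarith) hB0.le, hCB]
    · have hT : (μ + 3*s^2) * (μ*B + C) ≤
          (μ + 3*s^2) * (μ*(μ-1)*A + 2*μ*B + C) := by
        apply mul_le_mul_of_nonneg_left _ hS0.le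
        nlinarith [mul_nonneg (mul_self_nonneg μ) hA0.le,
          mul_nonneg hμ (sub_nonneg.2 hAB)]
      nlinarith [hT, mul_nonneg (mul_self_nonneg μ) hB0.le,
        mul_nonneg (mul_nonneg (show (0:ℝ) ≤ 3*s^2 - 1 by nlinarith) hμ) hB0.le,
        mul_nonneg hμ hC0.le,
        mul_nonneg (show (0:ℝ) ≤ 3*s^2 - s by nlinarith) hC0.le, hBC,
        mul_nonneg hμ (sub_nonneg.2 hAB)]
  -- rpow factorizations
  have he1 : ∀ t : ℝ, 0 < t → t ^ (μ-1) = t ^ (μ-2) * t := by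
    intro t ht
    rw [show μ - 1 = (μ-2) + 1 by ring, Real.rpow_add ht, Real.rpow_one]
  have he2 : ∀ t : ℝ, 0 < t → t ^ μ = t ^ (μ-2) * (t * t) := by
    intro t ht
    rw [show μ = (μ-2) + 2 by ring, Real.rpow_add ht,
      show (2:ℝ) = ((2:ℕ):ℝ) by norm_num, Real.rpow_natCast]
    ring
  -- limit at 0
  have hrpow0 : Tendsto (fun u : ℝ => u ^ μ) (nhdsWithin 0 (Ioi 0)) (nhds ((0:ℝ) ^ μ)) :=
    ((Real.continuousAt_rpow_const 0 μ (Or.inr hμ)).tendsto).mono_left nhdsWithin_le_nhds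
  have hlim0 : Tendsto (fun u : ℝ => u ^ μ * (Φ u / u)) (nhdsWithin 0 (Ioi 0)) (nhds 0) := by
    simpa using hrpow0.mul hΦ.tendsto_zero
  -- derivative within at 0
  have hd0 : HasDerivWithinAt (fun u : ℝ => u ^ μ * Φ u) 0 (Ici 0) 0 := by
    rw [hasDerivWithinAt_iff_tendsto_slope, Ici_sdiff_left]
    apply Tendsto.congr' _ hlim0
    filter_upwards [self_mem_nhdsWithin] with u (hu : u ∈ Ioi (0:ℝ))
    rw [slope_def_field, hΦ.zero]
    field_simp
    simp
  -- differentiability on Ici 0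
  have hdiffOn : DifferentiableOn ℝ (fun u : ℝ => u ^ μ * Φ u) (Ici 0) := by
    intro x hx
    rcases eq_or_lt_of_le (mem_Ici.1 hx) with h0 | hxpos
    · rw [← h0]
      exact hd0.differentiableWithinAt
    · exact (hgd x hxpos).differentiableAt.differentiableWithinAt
  -- values of derivWithin
  have hval : ∀ x : ℝ, 0 < x → derivWithin (fun u : ℝ => u ^ μ * Φ u) (Ici 0) x =
      μ * x ^ (μ - 1) * Φ x + x ^ μ * deriv Φ x := by
    intro x hx
    rw [derivWithin_of_mem_nhds (Ici_mem_nhds hx), hgderiv x hx]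
  have hval0 : derivWithin (fun u : ℝ => u ^ μ * Φ u) (Ici 0) 0 = 0 :=
    hd0.derivWithin (uniqueDiffOn_Ici 0 0 self_mem_Ici)
  -- continuity of derivWithin
  have hderivcont : ContinuousOn (derivWithin (fun u : ℝ => u ^ μ * Φ u) (Ici 0)) (Ici 0) := by
    intro x hx
    rcases eq_or_lt_of_le (mem_Ici.1 hx) with h0 | hxpos
    · rw [← h0]
      have hfil : nhdsWithin (0:ℝ) (Ici 0) = pure 0 ⊔ nhdsWithin 0 (Ioi 0) := by
        rw [← Ioi_insert, nhdsWithin_insert]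
      show Tendsto (derivWithin (fun u : ℝ => u ^ μ * Φ u) (Ici 0)) (nhdsWithin 0 (Ici 0)) _
      rw [hval0, hfil, tendsto_sup]
      constructor
      · simpa [hval0] using tendsto_pure_nhds (derivWithin (fun u : ℝ => u ^ μ * Φ u) (Ici 0)) 0
      · apply Tendsto.congr' (f₁ := fun u => μ * (u ^ μ * (Φ u / u)) + u ^ μ * derivWithin Φ (Ici 0) u)
        · filter_upwards [self_mem_nhdsWithin] with u (hu : u ∈ Ioi (0:ℝ))
          rw [hval u hu, psi_eq_deriv hu, Real.rpow_sub_one (ne_of_gt hu)]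
          field_simp
        · have hterm1 : Tendsto (fun u : ℝ => μ * (u ^ μ * (Φ u / u)))
              (nhdsWithin 0 (Ioi 0)) (nhds 0) := by
            simpa using hlim0.const_mul μ
          have hterm2 : Tendsto (fun u : ℝ => u ^ μ * derivWithin Φ (Ici 0) u)
              (nhdsWithin 0 (Ioi 0)) (nhds 0) := by
            have hpsi : Tendsto (derivWithin Φ (Ici 0)) (nhdsWithin 0 (Ioi 0)) (nhds 0) := by
              have := (psi_continuousOn hΦ) 0 self_mem_Ici
              rw [ContinuousWithinAt, psi_zero hΦ] at this
              exact this.mono_left (nhdsWithin_mono 0 Ioi_subset_Ici_self)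
            simpa using hrpow0.mul hpsi
          simpa using hterm1.add hterm2
    · apply ContinuousAt.continuousWithinAt
      have hF : ContinuousAt (fun u : ℝ => μ * u ^ (μ - 1) * Φ u + u ^ μ * deriv Φ u) x := by
        have c1 : ContinuousAt (fun u : ℝ => u ^ (μ-1)) x :=
          Real.continuousAt_rpow_const x (μ-1) (Or.inl hxpos.ne')
        have c2 : ContinuousAt (fun u : ℝ => u ^ μ) x :=
          Real.continuousAt_rpow_const x μ (Or.inl hxpos.ne')
        exact ((continuousAt_const.mul c1).mul (diffAt hΦ hxpos).continuousAt).add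
          (c2.mul (deriv_diffAt hΦ hxpos).continuousAt)
      apply hF.congr
      filter_upwards [isOpen_Ioi.mem_nhds hxpos] with u (hu : u ∈ Ioi (0:ℝ))
      exact (hval u hu).symm
  have hgC1 : ContDiffOn ℝ 1 (fun u : ℝ => u ^ μ * Φ u) (Ici 0) := by
    have := (contDiffOn_succ_iff_derivWithin (n := 0) (uniqueDiffOn_Ici 0)).2
      ⟨hdiffOn, by simp, contDiffOn_zero.2 hderivcont⟩
    simpa using this
  -- differentiability of deriv on Ioi 0
  have hderivdiff : DifferentiableOn ℝ (deriv (fun u : ℝ => u ^ μ * Φ u)) (Ioi 0) := by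
    intro x hx
    have hx' : (0:ℝ) < x := hx
    have hev : deriv (fun u : ℝ => u ^ μ * Φ u) =ᶠ[nhds x]
        fun u => μ * u ^ (μ - 1) * Φ u + u ^ μ * deriv Φ u := by
      filter_upwards [isOpen_Ioi.mem_nhds hx'] with u (hu : u ∈ Ioi (0:ℝ))
      exact hgderiv u hu
    have hdx : DifferentiableAt ℝ (fun u : ℝ => μ * u ^ (μ - 1) * Φ u + u ^ μ * deriv Φ u) x := by
      have d1 : DifferentiableAt ℝ (fun u : ℝ => u ^ (μ-1)) x :=
        (Real.hasDerivAt_rpow_const (Or.inl hx'.ne')).differentiableAt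
      have d2 : DifferentiableAt ℝ (fun u : ℝ => u ^ μ) x :=
        (Real.hasDerivAt_rpow_const (Or.inl hx'.ne')).differentiableAt
      exact (((d1.const_mul μ).mul (diffAt hΦ hx'))).add (d2.mul (deriv_diffAt hΦ hx'))
    exact (hev.differentiableAt_iff.2 hdx).differentiableWithinAt
  refine ⟨?_, ?_, ?_, ?_, ?_, ?_, ?_, ?_, ?_, ?_, ?_, ?_⟩
  · nlinarith
  · exact fun t ht => mul_nonneg (Real.rpow_nonneg ht μ) (hΦ.nonneg t ht)
  · simp [hΦ.zero]
  · intro a ha b hb hab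
    simp only
    have hb0 : (0:ℝ) < b := lt_of_le_of_lt (mem_Ici.1 ha) hab
    rcases eq_or_lt_of_le (mem_Ici.1 ha) with h0 | hapos
    · rw [← h0, hΦ.zero, mul_zero]
      exact mul_pos (Real.rpow_pos_of_pos hb0 μ) (phi_pos hΦ hb0)
    · have h1 : Φ a < Φ b := hΦ.strictMonoOn ha hb hab
      have h2 : a ^ μ ≤ b ^ μ := Real.rpow_le_rpow (mem_Ici.1 ha) hab.le hμ
      have h3 : (0:ℝ) < a ^ μ := Real.rpow_pos_of_pos hapos μ
      have h4 : (0:ℝ) ≤ Φ b := (phi_pos hΦ hb0).le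
      nlinarith [mul_lt_mul_of_pos_left h1 h3, mul_le_mul_of_nonneg_right h2 h4]
  · apply convexOn_of_deriv2_nonneg (convex_Ici 0) hgC1.continuousOn
    · rw [interior_Ici]
      exact fun x hx => (hgd x hx).differentiableAt.differentiableWithinAt
    · rw [interior_Ici]
      exact hderivdiff
    · rw [interior_Ici]
      intro x hx
      have hx' : (0:ℝ) < x := hx
      have hit : deriv^[2] (fun u : ℝ => u ^ μ * Φ u) x
          = deriv (deriv (fun u : ℝ => u ^ μ * Φ u)) x := by
        simp [Function.iterate_succ_apply', Function.iterate_one]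
      rw [hit, hgd2 x hx', he1 x hx', he2 x hx']
      have hP : (0:ℝ) < x ^ (μ-2) := Real.rpow_pos_of_pos hx' _
      have hX := (hcore x hx').1
      nlinarith [mul_nonneg hP.le hX]
  · have : (fun t : ℝ => t ^ μ * Φ t / t) = fun t => t ^ μ * (Φ t / t) := by
      funext t; rw [mul_div_assoc]
    simpa [this] using hlim0
  · apply tendsto_atTop_mono' atTop _ hΦ.tendsto_atTop
    filter_upwards [eventually_ge_atTop (1:ℝ)] with t ht1
    have ht0 : (0:ℝ) < t := lt_of_lt_of_le one_pos ht1
    have h1 : (1:ℝ) ≤ t ^ μ := by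
      rw [← Real.one_rpow μ]
      exact Real.rpow_le_rpow zero_le_one ht1 hμ
    have h2 : 0 ≤ Φ t / t := div_nonneg (hΦ.nonneg t ht0.le) ht0.le
    rw [mul_div_assoc]
    nlinarith [mul_nonneg (sub_nonneg.2 h1) h2]
  · exact hgC1
  · intro x hx
    have hx' : (0:ℝ) < x := hx
    exact ((Real.contDiffAt_rpow_const_of_ne hx'.ne').mul
      (hΦ.contDiffOn_two.contDiffAt (isOpen_Ioi.mem_nhds hx'))).contDiffWithinAt
  · intro t ht
    rw [hgderiv t ht]
    have hP : (0:ℝ) < t ^ (μ-1) := Real.rpow_pos_of_pos ht _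
    have hA0 : 0 < Φ t := phi_pos hΦ ht
    have hB0 : 0 < deriv Φ t := hΦ.deriv_pos t ht
    rw [he1 t ht, he2 t ht]
    have hQ : (0:ℝ) < t ^ (μ-2) := Real.rpow_pos_of_pos ht _
    nlinarith [mul_nonneg (mul_nonneg hQ.le ht.le) (mul_nonneg hμ hA0.le),
      mul_pos (mul_pos hQ ht) (mul_pos ht hB0)]
  · intro t ht
    rw [hgderiv t ht, hgd2 t ht, he1 t ht, he2 t ht]
    have hQ : (0:ℝ) < t ^ (μ-2) := Real.rpow_pos_of_pos ht _
    have hX := (hcore t ht).2.2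
    rw [one_div, inv_mul_le_iff₀ hS0]
    nlinarith [mul_le_mul_of_nonneg_left hX (mul_nonneg hQ.le ht.le)]
  · intro t ht
    rw [hgderiv t ht, hgd2 t ht, he1 t ht, he2 t ht]
    have hQ : (0:ℝ) < t ^ (μ-2) := Real.rpow_pos_of_pos ht _
    have hX := (hcore t ht).2.1
    nlinarith [mul_le_mul_of_nonneg_left hX (mul_nonneg hQ.le ht.le)]
end

section
/- Let Φ be an N-function with index s ≥ 1. Then there exists θ₀ ∈ (0,1), depending only on s, such that for every θ ∈ (θ₀, 1] there exists s_θ ≥ 1, depending only on s and θ, such that the function t ↦ (Φ(t))^θ is an N-function with index s_θ. -/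
open Real Set Filter MeasureTheory
open scoped RealInnerProductSpace

namespace St10

variable {Φ : ℝ → ℝ} {s : ℝ}

lemma phi_pos (hΦ : IsNFunction Φ s) {t : ℝ} (ht : 0 < t) : 0 < Φ t := by
  have h := hΦ.strictMonoOn (mem_Ici.mpr (le_refl 0))
    (mem_Ici.mpr ht.le) ht
  rwa [hΦ.zero] at h

lemma s_pos (hΦ : IsNFunction Φ s) : 0 < s := lt_of_lt_of_le one_pos hΦ.s_ge_one

lemma diffAt (hΦ : IsNFunction Φ s) {t : ℝ} (ht : 0 < t) : DifferentiableAt ℝ Φ t :=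
  (hΦ.contDiffOn_two.differentiableOn (by norm_num)).differentiableAt
    (isOpen_Ioi.mem_nhds ht)

lemma hasDerivAt_phi (hΦ : IsNFunction Φ s) {t : ℝ} (ht : 0 < t) :
    HasDerivAt Φ (deriv Φ t) t := (diffAt hΦ ht).hasDerivAt

lemma contDiffOn_deriv (hΦ : IsNFunction Φ s) : ContDiffOn ℝ 1 (deriv Φ) (Ioi 0) := by
  have h2 : ContDiffOn ℝ (1 + 1) Φ (Ioi 0) := by norm_num; exact hΦ.contDiffOn_two
  exact ((contDiffOn_succ_iff_deriv_of_isOpen isOpen_Ioi).1 h2).2.2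

lemma hasDerivAt_derivPhi (hΦ : IsNFunction Φ s) {t : ℝ} (ht : 0 < t) :
    HasDerivAt (deriv Φ) (deriv (deriv Φ) t) t :=
  (((contDiffOn_deriv hΦ).differentiableOn one_ne_zero).differentiableAt
    (isOpen_Ioi.mem_nhds ht)).hasDerivAt

lemma deriv_monoOn (hΦ : IsNFunction Φ s) : MonotoneOn (deriv Φ) (Ioi 0) := by
  apply monotoneOn_of_deriv_nonneg (convex_Ioi 0) ((contDiffOn_deriv hΦ).continuousOn)
  · rw [interior_Ioi]
    exact (contDiffOn_deriv hΦ).differentiableOn one_ne_zero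
  · intro x hx
    rw [interior_Ioi] at hx
    have h1 := hΦ.index_lower x hx
    have h2 := hΦ.deriv_pos x hx
    have hs := s_pos hΦ
    have h3 : 0 < x * deriv (deriv Φ) x := lt_of_lt_of_le (by positivity) h1
    by_contra hneg
    push_neg at hneg
    nlinarith [mul_nonneg hx.le (neg_nonneg.mpr hneg.le)]

lemma tendsto_phi_zero (hΦ : IsNFunction Φ s) :
    Tendsto Φ (nhdsWithin 0 (Ioi 0)) (nhds 0) := by
  have h := (hΦ.contDiffOn_one.continuousOn 0 (mem_Ici.mpr (le_refl 0)))
  rw [ContinuousWithinAt, hΦ.zero] at h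
  exact h.mono_left (nhdsWithin_mono 0 Ioi_subset_Ici_self)

lemma tendsto_tmulderiv_zero (hΦ : IsNFunction Φ s) :
    Tendsto (fun t => t * deriv Φ t) (nhdsWithin 0 (Ioi 0)) (nhds 0) := by
  apply squeeze_zero'
  · filter_upwards [self_mem_nhdsWithin] with t ht
    exact le_of_lt (mul_pos ht (hΦ.deriv_pos t ht))
  · filter_upwards [Ioc_mem_nhdsGT one_pos] with t ht
    exact mul_le_mul_of_nonneg_left
      (deriv_monoOn hΦ ht.1 (mem_Ioi.mpr one_pos) ht.2) ht.1.le
  · have : Tendsto (fun t : ℝ => t * deriv Φ 1) (nhds 0) (nhds (0 * deriv Φ 1)) :=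
      (continuous_id.mul continuous_const).tendsto 0
    rw [zero_mul] at this
    exact this.mono_left nhdsWithin_le_nhds

/-- `Φ t ≤ t Φ'(t)` for `t > 0`. -/
lemma phi_le_tmulderiv (hΦ : IsNFunction Φ s) {t : ℝ} (ht : 0 < t) :
    Φ t ≤ t * deriv Φ t := by
  set g : ℝ → ℝ := fun u => u * deriv Φ u - Φ u with hg
  have hd : ∀ x ∈ Ioi (0:ℝ), HasDerivAt g (x * deriv (deriv Φ) x) x := by
    intro x hx
    have h : HasDerivAt (fun u => u * deriv Φ u - Φ u) _ x :=
      ((hasDerivAt_id x).mul (hasDerivAt_derivPhi hΦ hx)).sub (hasDerivAt_phi hΦ hx)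
    convert h using 1
    simp only [id]
    ring
  have hmono : MonotoneOn g (Ioi 0) := by
    apply monotoneOn_of_deriv_nonneg (convex_Ioi 0)
    · exact fun x hx => ((hd x hx).continuousAt).continuousWithinAt
    · rw [interior_Ioi]; exact fun x hx => (hd x hx).differentiableAt.differentiableWithinAt
    · intro x hx
      rw [interior_Ioi] at hx
      rw [(hd x hx).deriv]
      have h1 := hΦ.index_lower x hx
      have h2 := hΦ.deriv_pos x hx
      have hs := s_pos hΦ
      have : 0 < (1/s) * deriv Φ x := by positivity
      linarith
  have hlim : Tendsto g (nhdsWithin 0 (Ioi 0)) (nhds 0) := by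
    have := (tendsto_tmulderiv_zero hΦ).sub (tendsto_phi_zero hΦ)
    rwa [sub_zero] at this
  have hev : ∀ᶠ u in nhdsWithin 0 (Ioi 0), g u ≤ g t := by
    filter_upwards [Ioo_mem_nhdsGT ht] with u hu
    exact hmono hu.1 ht hu.2.le
  have := le_of_tendsto hlim hev
  simpa [hg] using this

/-- `t Φ'(t) ≤ (s+1) Φ t` for `t > 0`. -/
lemma tmulderiv_le_phi (hΦ : IsNFunction Φ s) {t : ℝ} (ht : 0 < t) :
    t * deriv Φ t ≤ (s + 1) * Φ t := by
  set g : ℝ → ℝ := fun u => (s + 1) * Φ u - u * deriv Φ u with hg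
  have hd : ∀ x ∈ Ioi (0:ℝ), HasDerivAt g (s * deriv Φ x - x * deriv (deriv Φ) x) x := by
    intro x hx
    have h : HasDerivAt (fun u => (s + 1) * Φ u - u * deriv Φ u) _ x := ((hasDerivAt_phi hΦ hx).const_mul (s+1)).sub
      ((hasDerivAt_id x).mul (hasDerivAt_derivPhi hΦ hx))
    convert h using 1
    simp only [id]
    ring
  have hmono : MonotoneOn g (Ioi 0) := by
    apply monotoneOn_of_deriv_nonneg (convex_Ioi 0)
    · exact fun x hx => ((hd x hx).continuousAt).continuousWithinAt
    · rw [interior_Ioi]; exact fun x hx => (hd x hx).differentiableAt.differentiableWithinAt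
    · intro x hx
      rw [interior_Ioi] at hx
      rw [(hd x hx).deriv]
      have h1 := hΦ.index_upper x hx
      linarith
  have hlim : Tendsto g (nhdsWithin 0 (Ioi 0)) (nhds 0) := by
    have := ((tendsto_phi_zero hΦ).const_mul (s+1)).sub (tendsto_tmulderiv_zero hΦ)
    rwa [mul_zero, sub_zero] at this
  have hev : ∀ᶠ u in nhdsWithin 0 (Ioi 0), g u ≤ g t := by
    filter_upwards [Ioo_mem_nhdsGT ht] with u hu
    exact hmono hu.1 ht hu.2.le
  have := le_of_tendsto hlim hev
  simpa [hg] using this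

/-- `Φ'(u) u^(-1/s)` is monotone on `(0,∞)`. -/
lemma aux_monoOn (hΦ : IsNFunction Φ s) :
    MonotoneOn (fun u => deriv Φ u * u ^ (-(1/s))) (Ioi 0) := by
  have hd : ∀ x ∈ Ioi (0:ℝ), HasDerivAt (fun u => deriv Φ u * u ^ (-(1/s)))
      (deriv (deriv Φ) x * x ^ (-(1/s)) + deriv Φ x * (-(1/s) * x ^ (-(1/s) - 1))) x := by
    intro x hx
    exact (hasDerivAt_derivPhi hΦ hx).mul
      (Real.hasDerivAt_rpow_const (Or.inl (ne_of_gt hx)))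
  apply monotoneOn_of_deriv_nonneg (convex_Ioi 0)
  · exact fun x hx => ((hd x hx).continuousAt).continuousWithinAt
  · rw [interior_Ioi]; exact fun x hx => (hd x hx).differentiableAt.differentiableWithinAt
  · intro x hx
    rw [interior_Ioi] at hx
    rw [(hd x hx).deriv]
    have h1 := hΦ.index_lower x hx
    have hs := s_pos hΦ
    have hA : (0:ℝ) < x ^ (-(1/s) - 1) := Real.rpow_pos_of_pos hx _
    have hE : x ^ (-(1/s)) = x ^ (-(1/s) - 1) * x := by
      rw [← Real.rpow_add_one (ne_of_gt hx) (-(1/s) - 1)]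
      congr 1; ring
    rw [hE]
    have : deriv (deriv Φ) x * (x ^ (-(1/s) - 1) * x) + deriv Φ x * (-(1/s) * x ^ (-(1/s) - 1))
        = x ^ (-(1/s) - 1) * (x * deriv (deriv Φ) x - (1/s) * deriv Φ x) := by ring
    rw [this]
    have : 0 ≤ x * deriv (deriv Φ) x - (1/s) * deriv Φ x := by linarith
    positivity

/-- `Φ'(t) ≤ Φ'(1) t^(1/s)` for `0 < t ≤ 1`. -/
lemma deriv_le_pow (hΦ : IsNFunction Φ s) {t : ℝ} (ht : 0 < t) (ht1 : t ≤ 1) :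
    deriv Φ t ≤ deriv Φ 1 * t ^ (1/s) := by
  have h := aux_monoOn hΦ ht (mem_Ioi.mpr one_pos) ht1
  simp only [Real.one_rpow, mul_one] at h
  have hp : (0:ℝ) < t ^ (1/s) := Real.rpow_pos_of_pos ht _
  have hE : t ^ (-(1/s)) * t ^ (1/s) = 1 := by
    rw [← Real.rpow_add ht]; simp
  have := mul_le_mul_of_nonneg_right h hp.le
  rwa [mul_assoc, hE, mul_one] at this

/-- `Φ'(1) t^(1/s) ≤ Φ'(t)` for `t ≥ 1`. -/
lemma pow_le_deriv (hΦ : IsNFunction Φ s) {t : ℝ} (ht : 1 ≤ t) :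
    deriv Φ 1 * t ^ (1/s) ≤ deriv Φ t := by
  have ht0 : (0:ℝ) < t := lt_of_lt_of_le one_pos ht
  have h := aux_monoOn hΦ (mem_Ioi.mpr one_pos) ht0 ht
  simp only [Real.one_rpow, mul_one] at h
  have hp : (0:ℝ) < t ^ (1/s) := Real.rpow_pos_of_pos ht0 _
  have hE : t ^ (-(1/s)) * t ^ (1/s) = 1 := by
    rw [← Real.rpow_add ht0]; simp
  have := mul_le_mul_of_nonneg_right h hp.le
  rwa [mul_assoc, hE, mul_one] at this

/-- `Φ t ≤ Φ'(1) t^(1+1/s)` for `0 < t ≤ 1`. -/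
lemma phi_upper (hΦ : IsNFunction Φ s) {t : ℝ} (ht : 0 < t) (ht1 : t ≤ 1) :
    Φ t ≤ deriv Φ 1 * t ^ (1 + 1/s) := by
  have h1 := phi_le_tmulderiv hΦ ht
  have h2 := deriv_le_pow hΦ ht ht1
  have hE : t ^ (1 + 1/s) = t * t ^ (1/s) := by
    rw [Real.rpow_add ht, Real.rpow_one]
  calc Φ t ≤ t * deriv Φ t := h1
    _ ≤ t * (deriv Φ 1 * t ^ (1/s)) := mul_le_mul_of_nonneg_left h2 ht.le
    _ = deriv Φ 1 * t ^ (1 + 1/s) := by rw [hE]; ring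

/-- `(Φ'(1)/(s+1)) t^(1+1/s) ≤ Φ t` for `t ≥ 1`. -/
lemma phi_lower (hΦ : IsNFunction Φ s) {t : ℝ} (ht : 1 ≤ t) :
    deriv Φ 1 / (s+1) * t ^ (1 + 1/s) ≤ Φ t := by
  have ht0 : (0:ℝ) < t := lt_of_lt_of_le one_pos ht
  have hs := s_pos hΦ
  have h1 := tmulderiv_le_phi hΦ ht0
  have h2 := pow_le_deriv hΦ ht
  have hE : t ^ (1 + 1/s) = t * t ^ (1/s) := by
    rw [Real.rpow_add ht0, Real.rpow_one]
  have h3 : t * (deriv Φ 1 * t ^ (1/s)) ≤ t * deriv Φ t :=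
    mul_le_mul_of_nonneg_left h2 ht0.le
  have h4 : deriv Φ 1 * t ^ (1 + 1/s) ≤ (s+1) * Φ t := by
    rw [hE]; nlinarith
  rw [div_mul_eq_mul_div, div_le_iff₀ (by linarith : (0:ℝ) < s+1)]
  linarith

end St10

set_option maxHeartbeats 1000000 in
/-- For every `s ≥ 1` there is `θ₀ ∈ (0,1)`, depending only on `s`, such
that for every `θ ∈ (θ₀, 1]` there is `s_θ ≥ 1`, depending only on `s` and `θ`, such that
for every N-function `Φ` with index `s`, the function `t ↦ Φ(t)^θ` is an N-function with
index `s_θ`. -/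
theorem statement10 (s : ℝ) (hs : 1 ≤ s) :
    ∃ θ₀ : ℝ, 0 < θ₀ ∧ θ₀ < 1 ∧
      ∀ θ : ℝ, θ₀ < θ → θ ≤ 1 →
        ∃ sθ : ℝ, 1 ≤ sθ ∧
          ∀ Φ : ℝ → ℝ, IsNFunction Φ s → IsNFunction (fun t => Φ t ^ θ) sθ := by
  have hs0 : (0:ℝ) < s := lt_of_lt_of_le one_pos hs
  have hden : (0:ℝ) < 2*s*(s+1) := by positivity
  have hfracpos : (0:ℝ) < 1/(2*s*(s+1)) := by positivity
  have hfrac1 : 1/(2*s*(s+1)) < 1 := by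
    rw [div_lt_one hden]; nlinarith
  refine ⟨1 - 1/(2*s*(s+1)), by linarith, by linarith, ?_⟩
  intro θ hθ0 hθ1
  refine ⟨2*s, by linarith, ?_⟩
  intro Φ hΦ
  have hθpos : 0 < θ := by linarith
  have hkey : (1-θ)*(s+1) ≤ 1/(2*s) := by
    have h1 : (1-θ) < 1/(2*s*(s+1)) := by linarith
    have h2 : 1/(2*s*(s+1)) * (s+1) = 1/(2*s) := by
      field_simp
    nlinarith [mul_lt_mul_of_pos_right h1 (show (0:ℝ) < s+1 by linarith)]
  have hε : 0 < θ*(1+1/s) - 1 := by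
    have hA : s + 1 ≤ 2*s*(s+1) := by nlinarith
    have hle : 1/(2*s*(s+1)) ≤ 1/(s+1) :=
      one_div_le_one_div_of_le (by linarith) hA
    have hinv : 1/(s+1)*(s+1) = 1 := by field_simp
    have hm := mul_lt_mul_of_pos_right
      (show 1 - 1/(s+1) < θ by linarith) (show (0:ℝ) < s+1 by linarith)
    have h2 : s < θ*(s+1) := by nlinarith [hm, hinv]
    have hx : θ*(1+1/s) - 1 = (θ*(s+1) - s)/s := by field_simp
    rw [hx]
    exact div_pos (by linarith) hs0
  -- basic facts about Φ
  have hap : ∀ t : ℝ, 0 < t → 0 < Φ t := fun t ht => St10.phi_pos hΦ ht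
  have hc : 0 < deriv Φ 1 := hΦ.deriv_pos 1 one_pos
  -- derivatives of Ψ = Φ^θ
  have hΨd : ∀ t : ℝ, 0 < t →
      HasDerivAt (fun u => Φ u ^ θ) (θ * Φ t ^ (θ-1) * deriv Φ t) t := by
    intro t ht
    have h := (Real.hasDerivAt_rpow_const (x := Φ t) (p := θ)
      (Or.inl (hap t ht).ne')).comp t (St10.hasDerivAt_phi hΦ ht)
    simpa [Function.comp_def, mul_assoc] using h
  have hΨderiv : ∀ t : ℝ, 0 < t →
      deriv (fun u => Φ u ^ θ) t = θ * Φ t ^ (θ-1) * deriv Φ t :=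
    fun t ht => (hΨd t ht).deriv
  have hΨd2 : ∀ t : ℝ, 0 < t →
      HasDerivAt (deriv (fun u => Φ u ^ θ))
        (θ * ((θ-1) * Φ t ^ (θ-2) * (deriv Φ t)^2 + Φ t ^ (θ-1) * deriv (deriv Φ) t)) t := by
    intro t ht
    have h1 : HasDerivAt (fun u => Φ u ^ (θ-1)) ((θ-1) * Φ t ^ (θ-1-1) * deriv Φ t) t := by
      have h := (Real.hasDerivAt_rpow_const (x := Φ t) (p := θ-1)
        (Or.inl (hap t ht).ne')).comp t (St10.hasDerivAt_phi hΦ ht)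
      simpa [Function.comp_def, mul_assoc] using h
    have hG : HasDerivAt (fun u => θ * Φ u ^ (θ-1) * deriv Φ u)
        (θ * ((θ-1) * Φ t ^ (θ-2) * (deriv Φ t)^2 + Φ t ^ (θ-1) * deriv (deriv Φ) t)) t := by
      have h : HasDerivAt (fun u => θ * Φ u ^ (θ-1) * deriv Φ u) _ t :=
        (h1.const_mul θ).mul (St10.hasDerivAt_derivPhi hΦ ht)
      convert h using 1
      rw [show θ-2 = θ-1-1 by ring]
      ring
    apply hG.congr_of_eventuallyEq
    filter_upwards [isOpen_Ioi.mem_nhds ht] with u hu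
    exact hΨderiv u hu
  have hΨderiv2 : ∀ t : ℝ, 0 < t →
      deriv (deriv (fun u => Φ u ^ θ)) t
        = θ * ((θ-1) * Φ t ^ (θ-2) * (deriv Φ t)^2 + Φ t ^ (θ-1) * deriv (deriv Φ) t) :=
    fun t ht => (hΨd2 t ht).deriv
  have hΨdpos : ∀ t : ℝ, 0 < t → 0 < deriv (fun u => Φ u ^ θ) t := by
    intro t ht
    rw [hΨderiv t ht]
    have h0 := hap t ht
    have hd1 := hΦ.deriv_pos t ht
    positivity
  -- index inequalities
  have hIL : ∀ t : ℝ, 0 < t →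
      1/(2*s) * deriv (fun u => Φ u ^ θ) t ≤ t * deriv (deriv (fun u => Φ u ^ θ)) t := by
    intro t ht
    have h0 : 0 < Φ t := hap t ht
    have hd1 : 0 < deriv Φ t := hΦ.deriv_pos t ht
    have hil := hΦ.index_lower t ht
    have hiu := St10.tmulderiv_le_phi hΦ ht
    rw [hΨderiv t ht, hΨderiv2 t ht]
    have hE : Φ t ^ (θ-1) = Φ t ^ (θ-2) * Φ t := by
      rw [← Real.rpow_add_one h0.ne' (θ-2)]; congr 1; ring
    rw [hE]
    have hhalf : (1:ℝ)/s * (Φ t * deriv Φ t)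
        = 1/(2*s) * (Φ t * deriv Φ t) + 1/(2*s) * (Φ t * deriv Φ t) := by
      rw [show (1:ℝ)/(2*s) * (Φ t * deriv Φ t) + 1/(2*s) * (Φ t * deriv Φ t)
        = (1/(2*s) + 1/(2*s)) * (Φ t * deriv Φ t) by ring]
      congr 1
      field_simp
      ring
    have b1 : Φ t * ((1/s) * deriv Φ t) ≤ Φ t * (t * deriv (deriv Φ) t) :=
      mul_le_mul_of_nonneg_left hil h0.le
    have b2 : (1-θ)*((t*deriv Φ t)*deriv Φ t) ≤ (1-θ)*(((s+1)*Φ t)*deriv Φ t) :=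
      mul_le_mul_of_nonneg_left (mul_le_mul_of_nonneg_right hiu hd1.le) (by linarith)
    have b3 : (1-θ)*(s+1)*(Φ t*deriv Φ t) ≤ 1/(2*s)*(Φ t*deriv Φ t) :=
      mul_le_mul_of_nonneg_right hkey (by positivity)
    have inner : 1/(2*s) * (Φ t * deriv Φ t)
        ≤ Φ t*(t*deriv (deriv Φ) t) - (1-θ)*((t*deriv Φ t)*deriv Φ t) := by
      nlinarith [b1, b2, b3, hhalf]
    calc 1/(2*s) * (θ * (Φ t^(θ-2) * Φ t) * deriv Φ t)
        = (θ*Φ t^(θ-2)) * (1/(2*s) * (Φ t * deriv Φ t)) := by ring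
      _ ≤ (θ*Φ t^(θ-2)) * (Φ t*(t*deriv (deriv Φ) t) - (1-θ)*((t*deriv Φ t)*deriv Φ t)) := by
          apply mul_le_mul_of_nonneg_left inner
          have hA : 0 < Φ t ^ (θ-2) := Real.rpow_pos_of_pos h0 _
          positivity
      _ = t * (θ * ((θ-1) * Φ t^(θ-2) * (deriv Φ t)^2 + Φ t^(θ-2) * Φ t * deriv (deriv Φ) t)) := by
          ring
  have hIU : ∀ t : ℝ, 0 < t →
      t * deriv (deriv (fun u => Φ u ^ θ)) t ≤ 2*s * deriv (fun u => Φ u ^ θ) t := by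
    intro t ht
    have h0 : 0 < Φ t := hap t ht
    have hd1 : 0 < deriv Φ t := hΦ.deriv_pos t ht
    have hA : 0 < Φ t ^ (θ-2) := Real.rpow_pos_of_pos h0 _
    rw [hΨderiv t ht, hΨderiv2 t ht]
    have hE : Φ t ^ (θ-1) = Φ t ^ (θ-2) * Φ t := by
      rw [← Real.rpow_add_one h0.ne' (θ-2)]; congr 1; ring
    rw [hE]
    have b4 : Φ t*(t*deriv (deriv Φ) t) ≤ Φ t*(s*deriv Φ t) :=
      mul_le_mul_of_nonneg_left (hΦ.index_upper t ht) h0.le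
    have b5 : 0 ≤ (1-θ)*(t*(deriv Φ t)^2) :=
      mul_nonneg (by linarith) (by positivity)
    calc t * (θ * ((θ-1) * Φ t^(θ-2) * (deriv Φ t)^2 + Φ t^(θ-2) * Φ t * deriv (deriv Φ) t))
        = (θ*Φ t^(θ-2)) * (Φ t*(t*deriv (deriv Φ) t))
            - (θ*Φ t^(θ-2))*((1-θ)*(t*(deriv Φ t)^2)) := by ring
      _ ≤ (θ*Φ t^(θ-2)) * (Φ t*(s*deriv Φ t)) - 0 := by
          apply sub_le_sub
          · exact mul_le_mul_of_nonneg_left b4 (by positivity)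
          · exact mul_nonneg (by positivity) b5
      _ = s * (θ * (Φ t^(θ-2) * Φ t) * deriv Φ t) := by ring
      _ ≤ 2*s * (θ * (Φ t^(θ-2) * Φ t) * deriv Φ t) := by
          have hX : 0 ≤ θ * (Φ t^(θ-2) * Φ t) * deriv Φ t := by positivity
          nlinarith [mul_nonneg hs0.le hX]
  -- tendsto machinery
  have htK : ∀ K : ℝ, Tendsto (fun t:ℝ => K * t ^ (θ*(1+1/s)-1))
      (nhdsWithin 0 (Ioi 0)) (nhds 0) := by
    intro K
    have h1 : Tendsto (fun t:ℝ => t ^ (θ*(1+1/s)-1)) (nhds 0)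
        (nhds ((0:ℝ) ^ (θ*(1+1/s)-1))) :=
      Real.continuousAt_rpow_const 0 (θ*(1+1/s)-1) (Or.inr hε.le)
    rw [Real.zero_rpow hε.ne'] at h1
    have h2 : Tendsto (fun t:ℝ => K * t ^ (θ*(1+1/s)-1))
        (nhdsWithin 0 (Ioi 0)) (nhds (K * 0)) :=
      Tendsto.const_mul K (h1.mono_left nhdsWithin_le_nhds)
    rwa [mul_zero] at h2
  have hub : ∀ t : ℝ, 0 < t → t ≤ 1 →
      Φ t^θ/t ≤ (deriv Φ 1)^θ * t^(θ*(1+1/s)-1) := by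
    intro t ht ht1
    have h1 : Φ t ^ θ ≤ (deriv Φ 1 * t^(1+1/s))^θ :=
      Real.rpow_le_rpow (hΦ.nonneg t ht.le) (St10.phi_upper hΦ ht ht1) hθpos.le
    have h2 : (deriv Φ 1 * t^(1+1/s))^θ = (deriv Φ 1)^θ * t^((1+1/s)*θ) := by
      rw [Real.mul_rpow hc.le (Real.rpow_nonneg ht.le _), ← Real.rpow_mul ht.le]
    rw [div_le_iff₀ ht]
    calc Φ t^θ ≤ (deriv Φ 1)^θ * t^((1+1/s)*θ) := h1.trans_eq h2
      _ = (deriv Φ 1)^θ * t^(θ*(1+1/s)-1) * t := by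
          rw [show (1+1/s)*θ = θ*(1+1/s)-1+1 from by ring, mul_assoc,
            ← Real.rpow_add_one ht.ne' (θ*(1+1/s)-1)]
  have htend0 : Tendsto (fun t => Φ t ^ θ / t) (nhdsWithin 0 (Ioi 0)) (nhds 0) := by
    apply squeeze_zero'
    · filter_upwards [self_mem_nhdsWithin] with t ht
      exact div_nonneg (Real.rpow_nonneg (hΦ.nonneg t (le_of_lt ht)) θ) (le_of_lt ht)
    · filter_upwards [Ioc_mem_nhdsGT one_pos] with t ht
      exact hub t ht.1 ht.2
    · exact htK _
  -- bound on the derivative near 0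
  have hdbound : ∀ t : ℝ, 0 < t → t ≤ 1 →
      deriv (fun u => Φ u ^ θ) t ≤ (θ * (s+1)^(1-θ) * (deriv Φ 1)^θ) * t^(θ*(1+1/s)-1) := by
    intro t ht ht1
    have h0 := hap t ht
    have hd1 := hΦ.deriv_pos t ht
    have hq : 0 < t * deriv Φ t / (s+1) := by positivity
    have hqle : t * deriv Φ t / (s+1) ≤ Φ t := by
      rw [div_le_iff₀ (by linarith : (0:ℝ) < s+1)]
      nlinarith [St10.tmulderiv_le_phi hΦ ht]
    have h1 : Φ t ^ (θ-1) ≤ (t * deriv Φ t / (s+1))^(θ-1) :=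
      Real.rpow_le_rpow_of_nonpos hq hqle (by linarith)
    have h2 : (t * deriv Φ t/(s+1))^(θ-1)
        = (s+1)^(1-θ) * (t^(θ-1) * (deriv Φ t)^(θ-1)) := by
      rw [Real.div_rpow (by positivity) (by linarith : (0:ℝ) ≤ s+1),
        Real.mul_rpow ht.le hd1.le, div_eq_mul_inv,
        ← Real.rpow_neg (by linarith : (0:ℝ) ≤ s+1), show -(θ-1) = 1-θ by ring]
      ring
    have h3 : (deriv Φ t) ^ (θ-1) * deriv Φ t = (deriv Φ t) ^ θ := by
      rw [← Real.rpow_add_one hd1.ne' (θ-1)]; congr 1; ring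
    have h4 : (deriv Φ t) ^ θ ≤ (deriv Φ 1 * t^(1/s))^θ :=
      Real.rpow_le_rpow hd1.le (St10.deriv_le_pow hΦ ht ht1) hθpos.le
    have h5 : (deriv Φ 1 * t^(1/s))^θ = (deriv Φ 1)^θ * t^((1/s)*θ) := by
      rw [Real.mul_rpow hc.le (Real.rpow_nonneg ht.le _), ← Real.rpow_mul ht.le]
    have h6 : t^(θ-1) * t^((1/s)*θ) = t^(θ*(1+1/s)-1) := by
      rw [← Real.rpow_add ht]; congr 1; field_simp; ring
    rw [hΨderiv t ht]
    calc θ * Φ t^(θ-1) * deriv Φ t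
        ≤ θ * ((s+1)^(1-θ) * (t^(θ-1) * (deriv Φ t)^(θ-1))) * deriv Φ t := by
          exact mul_le_mul_of_nonneg_right
            (mul_le_mul_of_nonneg_left (h1.trans_eq h2) hθpos.le) hd1.le
      _ = θ * (s+1)^(1-θ) * t^(θ-1) * ((deriv Φ t)^(θ-1) * deriv Φ t) := by ring
      _ = θ * (s+1)^(1-θ) * t^(θ-1) * (deriv Φ t)^θ := by rw [h3]
      _ ≤ θ * (s+1)^(1-θ) * t^(θ-1) * ((deriv Φ 1)^θ * t^((1/s)*θ)) := by
          apply mul_le_mul_of_nonneg_left (h4.trans_eq h5)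
          positivity
      _ = (θ * (s+1)^(1-θ) * (deriv Φ 1)^θ) * (t^(θ-1) * t^((1/s)*θ)) := by ring
      _ = (θ * (s+1)^(1-θ) * (deriv Φ 1)^θ) * t^(θ*(1+1/s)-1) := by rw [h6]
  -- differentiability at 0 within Ici 0
  have hW : HasDerivWithinAt (fun u => Φ u ^ θ) 0 (Ici 0) 0 := by
    rw [hasDerivWithinAt_iff_tendsto_slope, Ici_sdiff_left]
    refine Tendsto.congr' ?_ htend0
    filter_upwards [self_mem_nhdsWithin] with t ht
    simp [slope_def_field, hΦ.zero, Real.zero_rpow hθpos.ne']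
  have hDiff : DifferentiableOn ℝ (fun u => Φ u ^ θ) (Ici 0) := by
    intro x hx
    rcases eq_or_lt_of_le (mem_Ici.mp hx) with h0 | h0
    · subst h0
      exact hW.differentiableWithinAt
    · exact (hΨd x h0).differentiableAt.differentiableWithinAt
  have hderivWithin_eq : ∀ x : ℝ, 0 < x →
      derivWithin (fun u => Φ u ^ θ) (Ici 0) x = deriv (fun u => Φ u ^ θ) x :=
    fun x hx => derivWithin_of_mem_nhds
      (mem_of_superset (isOpen_Ioi.mem_nhds hx) Ioi_subset_Ici_self)
  have hdW0 : derivWithin (fun u => Φ u ^ θ) (Ici 0) 0 = 0 :=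
    hW.derivWithin (uniqueDiffOn_Ici 0 0 (mem_Ici.mpr le_rfl))
  have hcont1 : ContinuousOn (derivWithin (fun u => Φ u ^ θ) (Ici 0)) (Ici 0) := by
    intro x hx
    rcases eq_or_lt_of_le (mem_Ici.mp hx) with h0 | h0
    · subst h0
      rw [← continuousWithinAt_Ioi_iff_Ici, ContinuousWithinAt, hdW0]
      refine squeeze_zero' ?_ ?_ (htK (θ * (s+1)^(1-θ) * (deriv Φ 1)^θ))
      · filter_upwards [self_mem_nhdsWithin] with t ht
        rw [hderivWithin_eq t ht, hΨderiv t ht]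
        exact mul_nonneg (mul_nonneg hθpos.le
          (Real.rpow_nonneg (hap t ht).le _)) (hΦ.deriv_pos t ht).le
      · filter_upwards [Ioc_mem_nhdsGT one_pos] with t ht
        rw [hderivWithin_eq t ht.1]
        exact hdbound t ht.1 ht.2
    · have hEq : derivWithin (fun u => Φ u ^ θ) (Ici 0)
          =ᶠ[nhds x] fun u => θ * Φ u^(θ-1) * deriv Φ u := by
        filter_upwards [isOpen_Ioi.mem_nhds h0] with u hu
        rw [hderivWithin_eq u hu, hΨderiv u hu]
      have hca : ContinuousAt (fun u => θ * Φ u^(θ-1) * deriv Φ u) x := by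
        refine ContinuousAt.mul (ContinuousAt.mul continuousAt_const ?_) ?_
        · exact (St10.diffAt hΦ h0).continuousAt.rpow_const (Or.inl (hap x h0).ne')
        · exact (St10.contDiffOn_deriv hΦ).continuousOn.continuousAt
            (isOpen_Ioi.mem_nhds h0)
      exact (hca.congr hEq.symm).continuousWithinAt
  have hC1 : ContDiffOn ℝ 1 (fun u => Φ u ^ θ) (Ici 0) := by
    rw [show (1 : WithTop ℕ∞) = 0 + 1 by norm_num,
      contDiffOn_succ_iff_derivWithin (uniqueDiffOn_Ici 0)]
    refine ⟨hDiff, by simp, ?_⟩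
    rw [contDiffOn_zero]
    exact hcont1
  -- lower bound at infinity
  have hc2 : 0 < deriv Φ 1/(s+1) := by positivity
  have hlb : ∀ t:ℝ, 1 ≤ t →
      (deriv Φ 1/(s+1))^θ * t^(θ*(1+1/s)-1) ≤ Φ t^θ/t := by
    intro t ht
    have ht0 : (0:ℝ) < t := lt_of_lt_of_le one_pos ht
    have h1 : (deriv Φ 1/(s+1) * t^(1+1/s))^θ ≤ Φ t^θ :=
      Real.rpow_le_rpow (by positivity) (St10.phi_lower hΦ ht) hθpos.le
    have h2 : (deriv Φ 1/(s+1) * t^(1+1/s))^θ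
        = (deriv Φ 1/(s+1))^θ * t^((1+1/s)*θ) := by
      rw [Real.mul_rpow hc2.le (Real.rpow_nonneg ht0.le _), ← Real.rpow_mul ht0.le]
    rw [le_div_iff₀ ht0]
    calc (deriv Φ 1/(s+1))^θ * t^(θ*(1+1/s)-1) * t
        = (deriv Φ 1/(s+1))^θ * t^((1+1/s)*θ) := by
          rw [show (1+1/s)*θ = θ*(1+1/s)-1+1 from by ring, mul_assoc,
            ← Real.rpow_add_one ht0.ne' (θ*(1+1/s)-1)]
      _ ≤ Φ t^θ := h2 ▸ h1
  refine { s_ge_one := by linarith,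
           nonneg := fun t ht => Real.rpow_nonneg (hΦ.nonneg t ht) θ,
           zero := by rw [hΦ.zero]; exact Real.zero_rpow hθpos.ne',
           strictMonoOn := ?_, convexOn := ?_, tendsto_zero := htend0,
           tendsto_atTop := ?_, contDiffOn_one := hC1, contDiffOn_two := ?_,
           deriv_pos := hΨdpos, index_lower := hIL, index_upper := hIU }
  · intro x hx y hy hxy
    exact Real.rpow_lt_rpow (hΦ.nonneg x (mem_Ici.mp hx))
      (hΦ.strictMonoOn hx hy hxy) hθpos
  · apply convexOn_of_deriv2_nonneg (convex_Ici 0) hC1.continuousOn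
    · rw [interior_Ici]
      exact fun x hx => (hΨd x hx).differentiableAt.differentiableWithinAt
    · rw [interior_Ici]
      exact fun x hx => (hΨd2 x hx).differentiableAt.differentiableWithinAt
    · rw [interior_Ici]
      intro x hx
      have hit : deriv^[2] (fun t => Φ t ^ θ) x = deriv (deriv (fun t => Φ t ^ θ)) x := by
        rw [show (2:ℕ) = 1 + 1 from rfl, Function.iterate_succ_apply',
          Function.iterate_one]
      rw [hit]
      have h1 := hIL x hx
      have h2 := hΨdpos x hx
      have h3 : 0 < x * deriv (deriv (fun t => Φ t ^ θ)) x :=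
        lt_of_lt_of_le (mul_pos (show (0:ℝ) < 1/(2*s) by positivity) h2) h1
      by_contra hneg
      push_neg at hneg
      nlinarith [mul_nonneg hx.le (neg_nonneg.mpr hneg.le)]
  · apply tendsto_atTop_mono' atTop ?_
      ((tendsto_rpow_atTop hε).const_mul_atTop
        (show (0:ℝ) < (deriv Φ 1/(s+1))^θ from Real.rpow_pos_of_pos hc2 θ))
    filter_upwards [eventually_ge_atTop (1:ℝ)] with t ht
    exact hlb t ht
  · intro t ht
    exact ((Real.contDiffAt_rpow_const_of_ne (hap t ht).ne').comp t
      (hΦ.contDiffOn_two.contDiffAt (isOpen_Ioi.mem_nhds ht))).contDiffWithinAt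
end

section
/- Let Φ be an N-function with index s ≥ 1. Then the function t ↦ Φ(t^{1/(s+1)}) is concave on [0,∞). -/
open Real Set Filter MeasureTheory
open scoped RealInnerProductSpace

/-- If `Φ` is an N-function with index `s ≥ 1`, then `t ↦ Φ(t^{1/(s+1)})`
is concave on `[0,∞)`. -/
theorem statement11 (Φ : ℝ → ℝ) (s : ℝ) (hΦ : IsNFunction Φ s) :
    ConcaveOn ℝ (Ici 0) (fun t => Φ (t ^ (1 / (s + 1)))) := by
  have hs1 : (1:ℝ) ≤ s := hΦ.s_ge_one
  have hs0 : (0:ℝ) < s + 1 := by linarith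
  set p : ℝ := 1 / (s + 1) with hpdef
  have hp : 0 < p := by positivity
  have hp1 : p < 1 := by
    rw [hpdef, div_lt_one hs0]; linarith
  -- derivative of Φ is C¹ on Ioi 0
  have hΦ' : ContDiffOn ℝ 1 (deriv Φ) (Ioi (0:ℝ)) := by
    have := hΦ.contDiffOn_two.deriv_of_isOpen (m := 1) isOpen_Ioi (by norm_num)
    simpa using this
  -- first derivative formula
  set h : ℝ → ℝ := fun x => deriv Φ (x ^ p) * (p * x ^ (p - 1)) with hhdef
  have hderiv : ∀ x : ℝ, 0 < x →
      HasDerivAt (fun t => Φ (t ^ p)) (h x) x := by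
    intro x hx
    have hu : (0:ℝ) < x ^ p := rpow_pos_of_pos hx p
    have h1 : HasDerivAt (fun t : ℝ => t ^ p) (p * x ^ (p - 1)) x :=
      Real.hasDerivAt_rpow_const (Or.inl hx.ne')
    have h2 : HasDerivAt Φ (deriv Φ (x ^ p)) (x ^ p) :=
      (((hΦ.contDiffOn_two.differentiableOn (by norm_num)).differentiableAt
        (isOpen_Ioi.mem_nhds hu))).hasDerivAt
    exact h2.comp x h1
  have hgderiv : ∀ x : ℝ, 0 < x → deriv (fun t => Φ (t ^ p)) x = h x :=
    fun x hx => (hderiv x hx).deriv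
  -- second derivative
  have hhderiv : ∀ x : ℝ, 0 < x →
      HasDerivAt h
        (deriv (deriv Φ) (x ^ p) * (p * x ^ (p - 1)) * (p * x ^ (p - 1))
          + deriv Φ (x ^ p) * (p * ((p - 1) * x ^ (p - 1 - 1)))) x := by
    intro x hx
    have hu : (0:ℝ) < x ^ p := rpow_pos_of_pos hx p
    have h1 : HasDerivAt (fun t : ℝ => t ^ p) (p * x ^ (p - 1)) x :=
      Real.hasDerivAt_rpow_const (Or.inl hx.ne')
    have h2 : HasDerivAt (deriv Φ) (deriv (deriv Φ) (x ^ p)) (x ^ p) :=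
      ((hΦ'.differentiableOn (by norm_num)).differentiableAt
        (isOpen_Ioi.mem_nhds hu)).hasDerivAt
    have h3 : HasDerivAt (fun t : ℝ => deriv Φ (t ^ p))
        (deriv (deriv Φ) (x ^ p) * (p * x ^ (p - 1))) x := by exact h2.comp x h1
    have h4 : HasDerivAt (fun t : ℝ => p * t ^ (p - 1))
        (p * ((p - 1) * x ^ (p - 1 - 1))) x :=
      (Real.hasDerivAt_rpow_const (Or.inl hx.ne')).const_mul p
    exact h3.mul h4
  apply concaveOn_of_deriv2_nonpos (convex_Ici 0)
  · -- continuity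
    apply hΦ.contDiffOn_one.continuousOn.comp
    · exact fun x _ => (Real.continuousAt_rpow_const x p (Or.inr hp.le)).continuousWithinAt
    · exact fun x _ => rpow_nonneg (by assumption) p
  · -- differentiability
    rw [interior_Ici]
    exact fun x hx => ((hderiv x hx).differentiableAt).differentiableWithinAt
  · -- differentiability of deriv
    rw [interior_Ici]
    intro x hx
    have : deriv (fun t => Φ (t ^ p)) =ᶠ[nhds x] h :=
      Filter.eventuallyEq_of_mem (isOpen_Ioi.mem_nhds hx) fun y hy => hgderiv y hy
    exact (((hhderiv x hx).differentiableAt).congr_of_eventuallyEq this).differentiableWithinAt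
  · -- second derivative nonpositive
    rw [interior_Ici]
    intro x hx
    have heq : deriv (fun t => Φ (t ^ p)) =ᶠ[nhds x] h :=
      Filter.eventuallyEq_of_mem (isOpen_Ioi.mem_nhds hx) fun y hy => hgderiv y hy
    have : deriv^[2] (fun t => Φ (t ^ p)) x = deriv h x := by
      simp only [Function.iterate_succ, Function.iterate_zero, Function.comp_apply, id]
      exact heq.deriv_eq
    rw [this, (hhderiv x hx).deriv]
    -- now the inequality
    set u : ℝ := x ^ p with hudef
    have hu : (0:ℝ) < u := rpow_pos_of_pos hx p
    have hidx : u * deriv (deriv Φ) u ≤ s * deriv Φ u := hΦ.index_upper u hu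
    have hd1 : 0 < deriv Φ u := hΦ.deriv_pos u hu
    -- rewrite powers
    have hx1 : x ^ (p - 1) * x ^ (p - 1) = x ^ p * x ^ (p - 1 - 1) := by
      rw [← Real.rpow_add hx, ← Real.rpow_add hx]; ring_nf
    have key : deriv (deriv Φ) u * (p * x ^ (p - 1)) * (p * x ^ (p - 1))
        = p * x ^ (p - 1 - 1) * (p * (u * deriv (deriv Φ) u)) := by
      rw [hudef]
      calc deriv (deriv Φ) (x ^ p) * (p * x ^ (p - 1)) * (p * x ^ (p - 1))
          = p * p * deriv (deriv Φ) (x ^ p) * (x ^ (p - 1) * x ^ (p - 1)) := by ring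
        _ = p * p * deriv (deriv Φ) (x ^ p) * (x ^ p * x ^ (p - 1 - 1)) := by rw [hx1]
        _ = p * x ^ (p - 1 - 1) * (p * (x ^ p * deriv (deriv Φ) (x ^ p))) := by ring
    rw [key]
    have hxp : (0:ℝ) < x ^ (p - 1 - 1) := rpow_pos_of_pos hx _
    have hps : p * s = 1 - p := by
      rw [hpdef]; field_simp; ring
    have hle : p * (u * deriv (deriv Φ) u) ≤ (1 - p) * deriv Φ u := by
      calc p * (u * deriv (deriv Φ) u) ≤ p * (s * deriv Φ u) := by
            exact mul_le_mul_of_nonneg_left hidx hp.le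
        _ = (1 - p) * deriv Φ u := by rw [← hps]; ring
    nlinarith [mul_pos hp hxp, mul_le_mul_of_nonneg_left hle (mul_pos hp hxp).le]
end

section
/- Let Φ be an N-function with index s ≥ 1. Then there exists a constant c > 0, depending only on s, such that for all s₁, s₂ ≥ 0 and every ε with 0 < ε ≤ 1 one has s₁·Φ'(s₂) + s₂·Φ'(s₁) ≤ ε·Φ(s₁) + (c/ε^{s})·Φ(s₂). -/
open Real Set Filter MeasureTheory
open scoped RealInnerProductSpace

lemma NF.spos (h : IsNFunction Φ s) : 0 < s := lt_of_lt_of_le one_pos h.s_ge_one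

lemma NF.hda (h : IsNFunction Φ s) {t : ℝ} (ht : 0 < t) :
    HasDerivAt Φ (deriv Φ t) t :=
  ((h.contDiffOn_two.differentiableOn (by norm_num)).differentiableAt
    (isOpen_Ioi.mem_nhds ht)).hasDerivAt

lemma NF.cd1 (h : IsNFunction Φ s) : ContDiffOn ℝ 1 (deriv Φ) (Ioi 0) :=
  h.contDiffOn_two.deriv_of_isOpen isOpen_Ioi (by norm_num)

lemma NF.hda2 (h : IsNFunction Φ s) {t : ℝ} (ht : 0 < t) :
    HasDerivAt (deriv Φ) (deriv (deriv Φ) t) t :=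
  (((NF.cd1 h).differentiableOn (by norm_num)).differentiableAt
    (isOpen_Ioi.mem_nhds ht)).hasDerivAt

lemma NF.mono (h : IsNFunction Φ s) : StrictMonoOn (deriv Φ) (Ioi 0) := by
  apply strictMonoOn_of_deriv_pos (convex_Ioi 0) (NF.cd1 h).continuousOn
  intro x hx
  rw [interior_Ioi] at hx
  have h1 := h.index_lower x hx
  have h2 := h.deriv_pos x hx
  have hs := NF.spos h
  have h3 : 0 < (1/s) * deriv Φ x := by positivity
  have h4 : 0 < x * deriv (deriv Φ) x := lt_of_lt_of_le h3 h1
  have hx' : (0:ℝ) < x := hx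
  nlinarith [h4, hx']

lemma NF.deriv_zero (h : IsNFunction Φ s) : deriv Φ 0 = 0 := by
  by_cases hd : DifferentiableAt ℝ Φ 0
  · have h2 : Tendsto (slope Φ 0) (nhdsWithin 0 (Ioi 0)) (nhds (deriv Φ 0)) :=
      (hasDerivAt_iff_tendsto_slope.1 hd.hasDerivAt).mono_left
        (nhdsWithin_mono 0 (fun x hx => ne_of_gt hx))
    have h1 : Tendsto (fun t => Φ t / t) (nhdsWithin 0 (Ioi 0)) (nhds (deriv Φ 0)) := by
      refine Tendsto.congr' ?_ h2
      filter_upwards [self_mem_nhdsWithin] with t ht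
      simp [slope_def_field, h.zero]
    exact tendsto_nhds_unique h1 h.tendsto_zero
  · exact deriv_zero_of_not_differentiableAt hd

lemma NF.hdag (h : IsNFunction Φ s) (p : ℝ) {t : ℝ} (ht : 0 < t) :
    HasDerivAt (fun x => deriv Φ x * x ^ (-p))
      (deriv (deriv Φ) t * t ^ (-p) + deriv Φ t * (-p * t ^ (-p - 1))) t :=
  (NF.hda2 h ht).mul (Real.hasDerivAt_rpow_const (Or.inl ht.ne'))

lemma NF.gcont (h : IsNFunction Φ s) (p : ℝ) :
    ContinuousOn (fun t : ℝ => deriv Φ t * t ^ (-p)) (Ioi 0) :=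
  (NF.cd1 h).continuousOn.mul
    (ContinuousOn.rpow_const continuousOn_id (fun t ht => Or.inl (ne_of_gt ht)))

lemma NF.anti (h : IsNFunction Φ s) :
    AntitoneOn (fun t : ℝ => deriv Φ t * t ^ (-s)) (Ioi 0) := by
  apply antitoneOn_of_deriv_nonpos (convex_Ioi 0) (NF.gcont h s)
  · rw [interior_Ioi]
    exact fun t ht => (NF.hdag h s ht).differentiableAt.differentiableWithinAt
  · rw [interior_Ioi]
    intro t ht
    rw [(NF.hdag h s ht).deriv]
    have h1 := h.index_upper t ht
    have h2 : (0:ℝ) < t ^ (-s - 1) := Real.rpow_pos_of_pos ht _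
    have h3 : t ^ (-s) = t ^ (-s-1) * t := by
      rw [← Real.rpow_add_one (ne_of_gt ht)]; congr 1; ring
    rw [h3]
    nlinarith [mul_nonneg h2.le (sub_nonneg.2 h1)]

lemma NF.mono2 (h : IsNFunction Φ s) :
    MonotoneOn (fun t : ℝ => deriv Φ t * t ^ (-(1/s))) (Ioi 0) := by
  apply monotoneOn_of_deriv_nonneg (convex_Ioi 0) (NF.gcont h (1/s))
  · rw [interior_Ioi]
    exact fun t ht => (NF.hdag h (1/s) ht).differentiableAt.differentiableWithinAt
  · rw [interior_Ioi]
    intro t ht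
    rw [(NF.hdag h (1/s) ht).deriv]
    have h1 := h.index_lower t ht
    have h2 : (0:ℝ) < t ^ (-(1/s) - 1) := Real.rpow_pos_of_pos ht _
    have h3 : t ^ (-(1/s)) = t ^ (-(1/s)-1) * t := by
      rw [← Real.rpow_add_one (ne_of_gt ht)]; congr 1; ring
    rw [h3]
    nlinarith [mul_nonneg h2.le (sub_nonneg.2 h1)]

lemma NF.scale_upper (h : IsNFunction Φ s) {a lam : ℝ} (ha : 0 < a) (hl : 1 ≤ lam) :
    deriv Φ (lam * a) ≤ lam ^ s * deriv Φ a := by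
  have hlam : (0:ℝ) < lam := lt_of_lt_of_le one_pos hl
  have hla : 0 < lam * a := by positivity
  have key : deriv Φ (lam*a) * (lam*a) ^ (-s) ≤ deriv Φ a * a ^ (-s) :=
    NF.anti h (mem_Ioi.2 ha) (mem_Ioi.2 hla) (le_mul_of_one_le_left ha.le hl)
  have h1 : (lam * a) ^ (-s) = lam ^ (-s) * a ^ (-s) :=
    Real.mul_rpow hlam.le ha.le
  rw [h1, ← mul_assoc] at key
  have h2 : (0:ℝ) < a ^ (-s) := Real.rpow_pos_of_pos ha _
  have k1 : deriv Φ (lam * a) * lam ^ (-s) ≤ deriv Φ a :=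
    le_of_mul_le_mul_right key h2
  have h4 : lam ^ s * lam ^ (-s) = 1 := by
    rw [← Real.rpow_add hlam]; simp
  calc deriv Φ (lam * a) = lam ^ s * (deriv Φ (lam * a) * lam ^ (-s)) := by
        rw [show lam ^ s * (deriv Φ (lam*a) * lam ^ (-s)) =
          (lam ^ s * lam ^ (-s)) * deriv Φ (lam*a) by ring, h4, one_mul]
    _ ≤ lam ^ s * deriv Φ a :=
        mul_le_mul_of_nonneg_left k1 (Real.rpow_pos_of_pos hlam s).le

lemma NF.scale_small (h : IsNFunction Φ s) {a mu : ℝ} (ha : 0 < a) (hmu : 0 < mu)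
    (hmu1 : mu ≤ 1) : deriv Φ (mu * a) ≤ mu ^ (1/s) * deriv Φ a := by
  have hma : 0 < mu * a := by positivity
  have key : deriv Φ (mu*a) * (mu*a) ^ (-(1/s)) ≤ deriv Φ a * a ^ (-(1/s)) :=
    NF.mono2 h (mem_Ioi.2 hma) (mem_Ioi.2 ha) (mul_le_of_le_one_left ha.le hmu1)
  have h1 : (mu * a) ^ (-(1/s)) = mu ^ (-(1/s)) * a ^ (-(1/s)) :=
    Real.mul_rpow hmu.le ha.le
  rw [h1, ← mul_assoc] at key
  have h2 : (0:ℝ) < a ^ (-(1/s)) := Real.rpow_pos_of_pos ha _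
  have k1 : deriv Φ (mu * a) * mu ^ (-(1/s)) ≤ deriv Φ a :=
    le_of_mul_le_mul_right key h2
  have h4 : mu ^ (1/s) * mu ^ (-(1/s)) = 1 := by
    rw [← Real.rpow_add hmu]; simp
  calc deriv Φ (mu * a) = mu ^ (1/s) * (deriv Φ (mu * a) * mu ^ (-(1/s))) := by
        rw [show mu ^ (1/s) * (deriv Φ (mu*a) * mu ^ (-(1/s))) =
          (mu ^ (1/s) * mu ^ (-(1/s))) * deriv Φ (mu*a) by ring, h4, one_mul]
    _ ≤ mu ^ (1/s) * deriv Φ a :=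
        mul_le_mul_of_nonneg_left k1 (Real.rpow_pos_of_pos hmu (1/s)).le

lemma NF.tphi (h : IsNFunction Φ s) {t : ℝ} (ht : 0 < t) :
    t * deriv Φ t ≤ 2 ^ (s+1) * Φ t := by
  have ht2 : 0 < t / 2 := by positivity
  have f1 : deriv Φ t ≤ 2 ^ s * deriv Φ (t/2) := by
    have h0 := NF.scale_upper h ht2 (one_le_two (α := ℝ))
    rwa [show (2:ℝ) * (t/2) = t by ring] at h0
  obtain ⟨c, hc, hslope⟩ := exists_hasDerivAt_eq_slope Φ (deriv Φ) (half_lt_self ht)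
    (h.contDiffOn_one.continuousOn.mono (fun x hx => le_trans ht2.le hx.1))
    (fun x hx => NF.hda h (lt_trans ht2 hx.1))
  have htne : t - t/2 ≠ 0 := by
    have he : t - t/2 = t/2 := by ring
    rw [he]; exact ht2.ne'
  have f3 : Φ t - Φ (t/2) = deriv Φ c * (t - t/2) := by
    rw [hslope, div_mul_cancel₀ _ htne]
  have f2 : deriv Φ (t/2) ≤ deriv Φ c :=
    ((NF.mono h).monotoneOn) (mem_Ioi.2 ht2) (mem_Ioi.2 (lt_trans ht2 hc.1)) hc.1.le
  have f4 : 0 ≤ Φ (t/2) := h.nonneg _ ht2.le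
  have f5 : (2:ℝ)^(s+1) = 2^s * 2 := Real.rpow_add_one two_ne_zero s
  rw [f5]
  have hp : (0:ℝ) < 2^s := Real.rpow_pos_of_pos two_pos s
  nlinarith [mul_le_mul_of_nonneg_left f1 ht.le,
    mul_le_mul_of_nonneg_left f2 (mul_nonneg hp.le ht.le), f3, f4, hp,
    mul_nonneg hp.le f4]

/-- For every `s ≥ 1` there is a constant `c > 0`, depending only on `s`,
such that every N-function `Φ` with index `s` satisfies
`s₁·Φ'(s₂) + s₂·Φ'(s₁) ≤ ε·Φ(s₁) + (c/ε^s)·Φ(s₂)` for all `s₁, s₂ ≥ 0` and `0 < ε ≤ 1`. -/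
theorem statement12 (s : ℝ) (hs : 1 ≤ s) :
    ∃ c : ℝ, 0 < c ∧
      ∀ Φ : ℝ → ℝ, IsNFunction Φ s →
        ∀ s₁ s₂ : ℝ, 0 ≤ s₁ → 0 ≤ s₂ → ∀ ε : ℝ, 0 < ε → ε ≤ 1 →
          s₁ * deriv Φ s₂ + s₂ * deriv Φ s₁ ≤ ε * Φ s₁ + c / ε ^ s * Φ s₂ := by
  have hs0 : (0:ℝ) < s := lt_of_lt_of_le one_pos hs
  obtain ⟨K, hKdef⟩ : ∃ K : ℝ, K = 2 ^ (s + 2) := ⟨_, rfl⟩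
  have hKpos : 0 < K := by rw [hKdef]; positivity
  have hKspos : (0:ℝ) < K ^ s := Real.rpow_pos_of_pos hKpos _
  have hK1 : 1 ≤ K := by
    rw [hKdef]
    have h0 : (2:ℝ)^(0:ℝ) ≤ 2^(s+2) :=
      Real.rpow_le_rpow_of_exponent_le one_le_two (by linarith)
    simpa using h0
  have h2s : K = 2^(s+1)*2 := by
    rw [hKdef, show s+2 = (s+1)+1 by ring, Real.rpow_add_one two_ne_zero]
  have hpow : (0:ℝ) < 2^(s+1) := Real.rpow_pos_of_pos two_pos _
  refine ⟨K * K ^ s, mul_pos hKpos hKspos, ?_⟩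
  intro Φ hΦ s₁ s₂ hs₁ hs₂ ε hε hε1
  have hεs : (0:ℝ) < ε ^ s := Real.rpow_pos_of_pos hε _
  rcases eq_or_lt_of_le hs₁ with h1 | h1
  · have hΦ2 : 0 ≤ Φ s₂ := hΦ.nonneg _ hs₂
    rw [← h1, NF.deriv_zero hΦ, hΦ.zero]
    have h0 : 0 ≤ K * K ^ s / ε ^ s * Φ s₂ :=
      mul_nonneg (by positivity) hΦ2
    simpa using h0
  rcases eq_or_lt_of_le hs₂ with h2 | h2
  · have hΦ1 : 0 ≤ Φ s₁ := hΦ.nonneg _ hs₁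
    rw [← h2, NF.deriv_zero hΦ, hΦ.zero]
    have h0 : 0 ≤ ε * Φ s₁ := mul_nonneg hε.le hΦ1
    simpa using h0
  have hmono := (NF.mono hΦ).monotoneOn
  have hd1 : s₁ * deriv Φ s₁ ≤ 2^(s+1) * Φ s₁ := NF.tphi hΦ h1
  have hd2 : s₂ * deriv Φ s₂ ≤ 2^(s+1) * Φ s₂ := NF.tphi hΦ h2
  have hΦ1 : 0 ≤ Φ s₁ := hΦ.nonneg _ hs₁
  have hΦ2 : 0 ≤ Φ s₂ := hΦ.nonneg _ hs₂
  have hd1' : 0 < deriv Φ s₁ := hΦ.deriv_pos _ h1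
  have hd2' : 0 < deriv Φ s₂ := hΦ.deriv_pos _ h2
  have hεK : 0 < ε / K := by positivity
  have hεK1 : ε / K ≤ 1 := by
    rw [div_le_one hKpos]; exact le_trans hε1 hK1
  have hKε1 : 1 ≤ K / ε := by
    rw [le_div_iff₀ hε]; nlinarith
  have hhalf : ε / K * (2^(s+1)) = ε/2 := by
    rw [h2s]; field_simp
  have hKs : (K/ε)^s = K^s / ε^s := Real.div_rpow hKpos.le hε.le s
  have hRnn : 0 ≤ 2^(s+1) * (K^s / ε^s) * Φ s₂ :=
    mul_nonneg (by positivity) hΦ2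
  have hLnn : 0 ≤ ε/2 * Φ s₁ := mul_nonneg (by positivity) hΦ1
  have bound2 : s₂ * deriv Φ s₁ ≤ ε/2 * Φ s₁ + 2^(s+1) * (K^s / ε^s) * Φ s₂ := by
    by_cases hc : s₂ ≤ ε / K * s₁
    · have e1 : s₂ * deriv Φ s₁ ≤ (ε/K * s₁) * deriv Φ s₁ :=
        mul_le_mul_of_nonneg_right hc hd1'.le
      have e2 : (ε/K * s₁) * deriv Φ s₁ ≤ ε/K * (2^(s+1) * Φ s₁) := by
        rw [mul_assoc]
        exact mul_le_mul_of_nonneg_left hd1 hεK.le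
      have e3 : ε/K * (2^(s+1) * Φ s₁) = ε/2 * Φ s₁ := by
        rw [← mul_assoc, hhalf]
      linarith
    · push_neg at hc
      have hle : s₁ ≤ K/ε * s₂ := by
        have hKne : K ≠ 0 := hKpos.ne'
        have hεne : ε ≠ 0 := hε.ne'
        calc s₁ = K/ε * (ε/K * s₁) := by field_simp
          _ ≤ K/ε * s₂ := mul_le_mul_of_nonneg_left hc.le (by positivity)
      have m1 : deriv Φ s₁ ≤ deriv Φ (K/ε * s₂) :=
        hmono (mem_Ioi.2 h1) (mem_Ioi.2 (by positivity)) hle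
      have m2 : deriv Φ (K/ε * s₂) ≤ (K/ε)^s * deriv Φ s₂ :=
        NF.scale_upper hΦ h2 hKε1
      have e1 : s₂ * deriv Φ s₁ ≤ (K^s/ε^s) * (s₂ * deriv Φ s₂) := by
        calc s₂ * deriv Φ s₁ ≤ s₂ * ((K/ε)^s * deriv Φ s₂) :=
            mul_le_mul_of_nonneg_left (le_trans m1 m2) h2.le
          _ = (K/ε)^s * (s₂ * deriv Φ s₂) := by ring
          _ = (K^s/ε^s) * (s₂ * deriv Φ s₂) := by rw [hKs]
      have e2 : (K^s/ε^s) * (s₂ * deriv Φ s₂) ≤ (K^s/ε^s) * (2^(s+1) * Φ s₂) :=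
        mul_le_mul_of_nonneg_left hd2 (by positivity)
      linarith [e1, e2, hLnn]
  have bound1 : s₁ * deriv Φ s₂ ≤ ε/2 * Φ s₁ + 2^(s+1) * (K^s / ε^s) * Φ s₂ := by
    have hmu : 0 < (ε/K)^s := Real.rpow_pos_of_pos hεK _
    by_cases hc : s₂ ≤ (ε/K)^s * s₁
    · have hmu1 : (ε/K)^s ≤ 1 := Real.rpow_le_one hεK.le hεK1 hs0.le
      have m1 : deriv Φ s₂ ≤ deriv Φ ((ε/K)^s * s₁) :=
        hmono (mem_Ioi.2 h2) (mem_Ioi.2 (by positivity)) hc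
      have m2 : deriv Φ ((ε/K)^s * s₁) ≤ ((ε/K)^s)^(1/s) * deriv Φ s₁ :=
        NF.scale_small hΦ h1 hmu hmu1
      have m3 : ((ε/K)^s)^(1/s) = ε/K := by
        rw [← Real.rpow_mul hεK.le, mul_one_div_cancel hs0.ne', Real.rpow_one]
      rw [m3] at m2
      have e1 : s₁ * deriv Φ s₂ ≤ ε/K * (s₁ * deriv Φ s₁) := by
        calc s₁ * deriv Φ s₂ ≤ s₁ * (ε/K * deriv Φ s₁) :=
            mul_le_mul_of_nonneg_left (le_trans m1 m2) hs₁
          _ = ε/K * (s₁ * deriv Φ s₁) := by ring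
      have e2 : ε/K * (s₁ * deriv Φ s₁) ≤ ε/K * (2^(s+1) * Φ s₁) :=
        mul_le_mul_of_nonneg_left hd1 hεK.le
      have e3 : ε/K * (2^(s+1) * Φ s₁) = ε/2 * Φ s₁ := by
        rw [← mul_assoc, hhalf]
      linarith
    · push_neg at hc
      have hinv : ((ε/K)^s)⁻¹ = K^s/ε^s := by
        have h0 : ((ε/K)⁻¹)^s = ((ε/K)^s)⁻¹ := Real.inv_rpow hεK.le s
        rw [← h0, inv_div, hKs]
      have hle : s₁ ≤ K^s/ε^s * s₂ := by
        calc s₁ = ((ε/K)^s)⁻¹ * ((ε/K)^s * s₁) := by rw [← mul_assoc, inv_mul_cancel₀ hmu.ne', one_mul]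
          _ ≤ ((ε/K)^s)⁻¹ * s₂ := mul_le_mul_of_nonneg_left hc.le (by positivity)
          _ = K^s/ε^s * s₂ := by rw [hinv]
      have e1 : s₁ * deriv Φ s₂ ≤ K^s/ε^s * (s₂ * deriv Φ s₂) := by
        calc s₁ * deriv Φ s₂ ≤ (K^s/ε^s * s₂) * deriv Φ s₂ :=
            mul_le_mul_of_nonneg_right hle hd2'.le
          _ = K^s/ε^s * (s₂ * deriv Φ s₂) := by ring
      have e2 : K^s/ε^s * (s₂ * deriv Φ s₂) ≤ K^s/ε^s * (2^(s+1) * Φ s₂) :=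
        mul_le_mul_of_nonneg_left hd2 (by positivity)
      linarith [e1, e2, hLnn]
  have hfin : K * K^s / ε^s * Φ s₂ = 2 * (2^(s+1) * (K^s/ε^s) * Φ s₂) := by
    rw [h2s]; ring
  linarith [bound1, bound2, hfin.le, hfin.ge]
end

section
/- Let n ≥ 2 and let Φ be an N-function with index s ≥ 1. There exists a constant c > 0, depending only on n and s, such that for all z₁, z₂ ∈ ℝⁿ∖{0} one has |V_Φ(z₂) − V_Φ(z₁)|² ≤ c·∫₀¹ |V_Φ(θ·z₂ + (1−θ)·z₁) − V_Φ(z₁)|²·θ⁻¹ dθ. -/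
open Real Set Filter MeasureTheory
open scoped RealInnerProductSpace

/-- `V_Φ(z) := (Φ'(|z|)/|z|)^{1/2} · z` (equal to `0` at `z = 0`). -/
noncomputable def VPhi {n : ℕ} (Φ : ℝ → ℝ) (z : EuclideanSpace ℝ (Fin n)) :
    EuclideanSpace ℝ (Fin n) :=
  ((deriv Φ ‖z‖ / ‖z‖) ^ ((1 : ℝ) / 2)) • z

set_option maxHeartbeats 1000000

namespace NFAux

theorem affine {A B p q : ℝ} (hp : |p| ≤ q) (h1 : 0 ≤ A + B * q)
    (h2 : 0 ≤ A - B * q) : 0 ≤ A + B * p := by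
  rcases abs_le.mp hp with ⟨h3, h4⟩
  rcases le_or_gt 0 B with hB | hB
  · nlinarith
  · nlinarith

variable {Φ : ℝ → ℝ} {s : ℝ}

theorem contOn (hΦ : IsNFunction Φ s) : ContinuousOn (deriv Φ) (Ioi 0) :=
  hΦ.contDiffOn_two.continuousOn_deriv_of_isOpen isOpen_Ioi (by norm_num)

theorem diffOn (hΦ : IsNFunction Φ s) : DifferentiableOn ℝ (deriv Φ) (Ioi 0) :=
  (hΦ.contDiffOn_two.deriv_of_isOpen isOpen_Ioi (show (1:WithTop ℕ∞)+1 ≤ 2 by norm_num)).differentiableOn one_ne_zero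

theorem hasDeriv (hΦ : IsNFunction Φ s) {t : ℝ} (ht : 0 < t) :
    HasDerivAt (deriv Φ) (deriv (deriv Φ) t) t := by
  have := ((diffOn hΦ) t ht).differentiableAt (isOpen_Ioi.mem_nhds ht)
  exact this.hasDerivAt

theorem snd_pos (hΦ : IsNFunction Φ s) {t : ℝ} (ht : 0 < t) : 0 < deriv (deriv Φ) t := by
  have h1 := hΦ.index_lower t ht
  have h2 := hΦ.deriv_pos t ht
  have hs : (0:ℝ) < s := lt_of_lt_of_le one_pos hΦ.s_ge_one
  nlinarith [mul_pos (one_div_pos.mpr hs) h2]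

theorem mono (hΦ : IsNFunction Φ s) {a b : ℝ} (ha : 0 < a) (hab : a ≤ b) :
    deriv Φ a ≤ deriv Φ b := by
  have hsm : StrictMonoOn (deriv Φ) (Ioi 0) := by
    apply strictMonoOn_of_deriv_pos (convex_Ioi 0) (contOn hΦ)
    intro x hx
    rw [interior_Ioi] at hx
    exact snd_pos hΦ hx
  rcases eq_or_lt_of_le hab with rfl | h
  · exact le_refl _
  · exact (hsm ha (lt_trans ha h) h).le


theorem pow_bound (hΦ : IsNFunction Φ s) {a b : ℝ} (ha : 0 < a) (hab : a ≤ b) :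
    deriv Φ b * a ^ s ≤ deriv Φ a * b ^ s := by
  have hb : 0 < b := lt_of_lt_of_le ha hab
  have hs : (0:ℝ) < s := lt_of_lt_of_le one_pos hΦ.s_ge_one
  have key : AntitoneOn (fun t => deriv Φ t / t ^ s) (Ioi 0) := by
    have hder : ∀ t ∈ Ioi (0:ℝ), HasDerivAt (fun t => deriv Φ t / t ^ s)
        ((deriv (deriv Φ) t * t ^ s - deriv Φ t * (s * t ^ (s - 1))) / (t ^ s) ^ 2) t := by
      intro t ht
      have h1 := hasDeriv hΦ ht
      have h2 : HasDerivAt (fun x : ℝ => x ^ s) (s * t ^ (s - 1)) t :=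
        Real.hasDerivAt_rpow_const (Or.inl (ne_of_gt ht))
      exact h1.div h2 (ne_of_gt (Real.rpow_pos_of_pos ht s))
    apply antitoneOn_of_deriv_nonpos (convex_Ioi 0)
    · intro t ht
      exact ((hder t ht).continuousAt).continuousWithinAt
    · intro t ht
      rw [interior_Ioi] at ht
      exact (hder t ht).differentiableAt.differentiableWithinAt
    · intro t ht
      rw [interior_Ioi] at ht
      rw [(hder t ht).deriv]
      apply div_nonpos_of_nonpos_of_nonneg _ (sq_nonneg _)
      have hup := hΦ.index_upper t ht
      have hpow : t ^ s = t ^ (s - 1) * t := by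
        rw [← Real.rpow_add_one (ne_of_gt ht) (s - 1)]; ring_nf
      have hpw : (0:ℝ) ≤ t ^ (s - 1) := (Real.rpow_pos_of_pos ht _).le
      rw [hpow]
      nlinarith
  have := key (mem_Ioi.mpr ha) (mem_Ioi.mpr hb) hab
  rw [div_le_div_iff₀ (Real.rpow_pos_of_pos hb s) (Real.rpow_pos_of_pos ha s)] at this
  linarith

/-- doubling: `φ(b) ≤ 2^s φ(a)` whenever `0 < a`, `0 < b ≤ 2a`. -/
theorem double (hΦ : IsNFunction Φ s) {a b : ℝ} (ha : 0 < a) (hb : 0 < b) (hab : b ≤ 2 * a) :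
    deriv Φ b ≤ 2 ^ s * deriv Φ a := by
  have hK : (1:ℝ) ≤ 2 ^ s := Real.one_le_rpow (by norm_num) (le_trans zero_le_one hΦ.s_ge_one)
  rcases le_total b a with h | h
  · have := mono hΦ hb h
    nlinarith [hΦ.deriv_pos a ha]
  · have h1 := pow_bound hΦ ha h
    have h2 : (b:ℝ) ^ s ≤ (2 * a) ^ s := Real.rpow_le_rpow hb.le hab (le_trans zero_le_one hΦ.s_ge_one)
    have h3 : ((2:ℝ) * a) ^ s = 2 ^ s * a ^ s := Real.mul_rpow (by norm_num) ha.le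
    have hpa : (0:ℝ) < a ^ s := Real.rpow_pos_of_pos ha s
    have h4 : deriv Φ b * a ^ s ≤ deriv Φ a * (2 ^ s * a ^ s) := by
      calc deriv Φ b * a ^ s ≤ deriv Φ a * b ^ s := h1
      _ ≤ deriv Φ a * (2 ^ s * a ^ s) := by
          rw [← h3]; exact mul_le_mul_of_nonneg_left h2 (hΦ.deriv_pos a ha).le
    have := le_of_mul_le_mul_right (by linarith [h4] : deriv Φ b * a ^ s ≤ (2 ^ s * deriv Φ a) * a ^ s) hpa
    exact this


theorem kdiff_upper (hΦ : IsNFunction Φ s) {r ρ : ℝ} (hρ : 0 < ρ) (hrρ : ρ ≤ r) :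
    deriv Φ r * r - deriv Φ ρ * ρ ≤ (s + 1) * deriv Φ r * (r - ρ) := by
  have hr : 0 < r := lt_of_lt_of_le hρ hrρ
  set x := ρ / r with hxdef
  have hx0 : 0 < x := div_pos hρ hr
  have hx1 : x ≤ 1 := (div_le_one hr).mpr hrρ
  have hrx : r * x = ρ := by rw [hxdef]; field_simp
  have hb1 := pow_bound hΦ hρ hrρ
  have hφρ : deriv Φ r * x ^ s ≤ deriv Φ ρ := by
    have hxs : x ^ s = ρ ^ s / r ^ s := Real.div_rpow hρ.le hr.le s
    rw [hxs, ← mul_div_assoc, div_le_iff₀ (Real.rpow_pos_of_pos hr s)]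
    exact hb1
  have bern : 1 + (s + 1) * (x - 1) ≤ x ^ (s + 1) := by
    have := one_add_mul_self_le_rpow_one_add (s := x - 1) (by linarith) (p := s + 1)
      (by linarith [hΦ.s_ge_one])
    rwa [show (1:ℝ) + (x - 1) = x by ring] at this
  have hxp : x ^ (s + 1) = x ^ s * x := by
    rw [Real.rpow_add hx0, Real.rpow_one]
  have key : deriv Φ r * r * (1 + (s + 1) * (x - 1)) ≤ deriv Φ ρ * ρ := by
    have h1 : deriv Φ r * r * x ^ (s + 1) ≤ deriv Φ ρ * ρ := by
      rw [hxp]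
      calc deriv Φ r * r * (x ^ s * x) = deriv Φ r * x ^ s * (r * x) := by ring
      _ ≤ deriv Φ ρ * (r * x) := by
          apply mul_le_mul_of_nonneg_right hφρ
          rw [hrx]; exact hρ.le
      _ = deriv Φ ρ * ρ := by rw [hrx]
    calc deriv Φ r * r * (1 + (s + 1) * (x - 1)) ≤ deriv Φ r * r * x ^ (s + 1) := by
          apply mul_le_mul_of_nonneg_left bern
          exact mul_nonneg (hΦ.deriv_pos r hr).le hr.le
    _ ≤ deriv Φ ρ * ρ := h1
  have h3 : (s + 1) * deriv Φ r * (r - ρ) = deriv Φ r * r * (-((s + 1) * (x - 1))) := by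
    have h2 : r * (1 - x) = r - ρ := by rw [mul_sub, hrx, mul_one]
    rw [← h2]; ring
  rw [h3]; linarith

theorem kdiff_lower (hΦ : IsNFunction Φ s) {r ρ : ℝ} (hρ : 0 < ρ) (hrρ : ρ ≤ r) :
    deriv Φ (r + ρ) * (r - ρ) ≤ 2 ^ s * (deriv Φ r * r - deriv Φ ρ * ρ) := by
  have hr : 0 < r := lt_of_lt_of_le hρ hrρ
  have hd := double hΦ hr (by linarith : (0:ℝ) < r + ρ) (by linarith)
  have hm := mono hΦ hρ hrρ
  have hK : (1:ℝ) ≤ 2 ^ s := Real.one_le_rpow (by norm_num) (le_trans zero_le_one hΦ.s_ge_one)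
  have p1 := mul_le_mul_of_nonneg_right hd (show (0:ℝ) ≤ r - ρ by linarith)
  have p2 := mul_le_mul_of_nonneg_right
    (mul_le_mul_of_nonneg_left hm (show (0:ℝ) ≤ 2 ^ s by linarith)) hρ.le
  nlinarith [p1, p2]

section Scalar

variable (hΦ : IsNFunction Φ s) {r ρ X Y : ℝ} (hρ : 0 < ρ) (hrρ : ρ ≤ r)
  (hX : 0 ≤ X) (hY : 0 ≤ Y) (hX2 : X ^ 2 = deriv Φ r * r) (hY2 : Y ^ 2 = deriv Φ ρ * ρ)

include hΦ hρ hrρ hX hY hX2 hY2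

theorem scalar1 : (X + Y) ^ 2 ≤ 4 * (deriv Φ (r + ρ) * (r + ρ)) := by
  have hr : 0 < r := lt_of_lt_of_le hρ hrρ
  have h1 : deriv Φ r ≤ deriv Φ (r + ρ) := mono hΦ hr (by linarith)
  have h2 : Y ^ 2 ≤ X ^ 2 := by
    rw [hX2, hY2]
    have := mono hΦ hρ hrρ
    nlinarith [hΦ.deriv_pos r hr]
  have h3 : Y ≤ X := by nlinarith
  have h4 : X ^ 2 ≤ deriv Φ (r + ρ) * (r + ρ) := by
    rw [hX2]
    have := hΦ.deriv_pos r hr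
    nlinarith
  nlinarith

theorem scalar2 : deriv Φ (r + ρ) * (r + ρ) ≤ 2 * 2 ^ s * (X + Y) ^ 2 := by
  have hr : 0 < r := lt_of_lt_of_le hρ hrρ
  have hd := double hΦ hr (by linarith : (0:ℝ) < r + ρ) (by linarith)
  have hK : (0:ℝ) < 2 ^ s := Real.rpow_pos_of_pos (by norm_num) s
  have h1 : deriv Φ (r + ρ) * (r + ρ) ≤ 2 ^ s * deriv Φ r * (2 * r) := by
    have := hΦ.deriv_pos (r + ρ) (by linarith)
    nlinarith [hΦ.deriv_pos r hr]
  have h2 : 2 ^ s * deriv Φ r * (2 * r) = 2 * 2 ^ s * X ^ 2 := by rw [hX2]; ring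
  nlinarith [mul_nonneg hX hY, sq_nonneg Y]

theorem scalar4 : (X - Y) ^ 2 * (r + ρ) ≤ (s + 1) ^ 2 * (2 * 2 ^ s) * deriv Φ (r + ρ) * (r - ρ) ^ 2 := by
  have hr : 0 < r := lt_of_lt_of_le hρ hrρ
  have hT : (0:ℝ) < r + ρ := by linarith
  have hφT : 0 < deriv Φ (r + ρ) := hΦ.deriv_pos _ hT
  have c1 := scalar2 hΦ hρ hrρ hX hY hX2 hY2
  have c2 : X ^ 2 - Y ^ 2 ≤ (s + 1) * deriv Φ (r + ρ) * (r - ρ) := by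
    have := kdiff_upper hΦ hρ hrρ
    have h1 : deriv Φ r ≤ deriv Φ (r + ρ) := mono hΦ hr (by linarith)
    rw [hX2, hY2]
    have h2 := mul_le_mul_of_nonneg_right
      (mul_le_mul_of_nonneg_left h1 (show (0:ℝ) ≤ s + 1 by linarith [hΦ.s_ge_one]))
      (show (0:ℝ) ≤ r - ρ by linarith)
    linarith
  have c3 : 0 ≤ X ^ 2 - Y ^ 2 := by
    rw [hX2, hY2]
    have := mono hΦ hρ hrρ
    nlinarith [hΦ.deriv_pos r hr]
  have csq : (X ^ 2 - Y ^ 2) ^ 2 ≤ ((s + 1) * deriv Φ (r + ρ) * (r - ρ)) ^ 2 := by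
    nlinarith [c2, c3]
  have big : (X - Y) ^ 2 * (deriv Φ (r + ρ) * (r + ρ))
      ≤ 2 * 2 ^ s * (s + 1) ^ 2 * (deriv Φ (r + ρ)) ^ 2 * (r - ρ) ^ 2 := by
    nlinarith [c1, csq, sq_nonneg (X - Y), Real.rpow_pos_of_pos (show (0:ℝ) < 2 by norm_num) s]
  nlinarith [big, hφT]

theorem scalar3 : deriv Φ (r + ρ) * (r - ρ) ^ 2 ≤ 4 * (2 ^ s) ^ 2 * (X - Y) ^ 2 * (r + ρ) := by
  have hr : 0 < r := lt_of_lt_of_le hρ hrρ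
  have hT : (0:ℝ) < r + ρ := by linarith
  have hφT : 0 < deriv Φ (r + ρ) := hΦ.deriv_pos _ hT
  have hK : (0:ℝ) < 2 ^ s := Real.rpow_pos_of_pos (by norm_num) s
  have c4 : deriv Φ (r + ρ) * (r - ρ) ≤ 2 ^ s * (X ^ 2 - Y ^ 2) := by
    have := kdiff_lower hΦ hρ hrρ
    rw [hX2, hY2]
    linarith
  have c5 := scalar1 hΦ hρ hrρ hX hY hX2 hY2
  have c6 : 0 ≤ deriv Φ (r + ρ) * (r - ρ) := mul_nonneg hφT.le (by linarith)
  have csq : (deriv Φ (r + ρ) * (r - ρ)) ^ 2 ≤ (2 ^ s * (X ^ 2 - Y ^ 2)) ^ 2 := by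
    nlinarith [c4, c6]
  have big2 : (deriv Φ (r + ρ) * (r - ρ)) ^ 2
      ≤ 4 * (2 ^ s) ^ 2 * (X - Y) ^ 2 * (deriv Φ (r + ρ) * (r + ρ)) := by
    nlinarith [csq, c5, sq_nonneg (2 ^ s * (X - Y))]
  nlinarith [big2, hφT]

end Scalar


theorem VPhi_zero {n : ℕ} : VPhi Φ (0 : EuclideanSpace ℝ (Fin n)) = 0 := by
  simp [VPhi]

theorem keyE_core (hΦ : IsNFunction Φ s) {r ρ u v p : ℝ} (hρ : 0 < ρ) (hrρ : ρ ≤ r)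
    (hu : 0 ≤ u) (hv : 0 ≤ v) (hu2 : u ^ 2 = deriv Φ r / r) (hv2 : v ^ 2 = deriv Φ ρ / ρ)
    (hp : |p| ≤ r * ρ) :
    (u ^ 2 * r ^ 2 - 2 * (u * v) * p + v ^ 2 * ρ ^ 2) * (r + ρ)
        ≤ (s + 1) ^ 2 * (2 * 2 ^ s) * deriv Φ (r + ρ) * (r ^ 2 - 2 * p + ρ ^ 2)
      ∧ deriv Φ (r + ρ) * (r ^ 2 - 2 * p + ρ ^ 2)
        ≤ 4 * (2 ^ s) ^ 2 * ((u ^ 2 * r ^ 2 - 2 * (u * v) * p + v ^ 2 * ρ ^ 2) * (r + ρ)) := by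
  have hr : 0 < r := lt_of_lt_of_le hρ hrρ
  have hφr := hΦ.deriv_pos r hr
  have hφρ := hΦ.deriv_pos ρ hρ
  have hX2 : (u * r) ^ 2 = deriv Φ r * r := by
    rw [mul_pow, hu2]; field_simp
  have hY2 : (v * ρ) ^ 2 = deriv Φ ρ * ρ := by
    rw [mul_pow, hv2]; field_simp
  have hT : (0:ℝ) < r + ρ := by linarith
  have hφT : 0 < deriv Φ (r + ρ) := hΦ.deriv_pos _ hT
  have hK1 : (1:ℝ) ≤ 2 ^ s := Real.one_le_rpow (by norm_num) (le_trans zero_le_one hΦ.s_ge_one)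
  have hXn : 0 ≤ u * r := mul_nonneg hu hr.le
  have hYn : 0 ≤ v * ρ := mul_nonneg hv hρ.le
  have s1 := scalar1 hΦ hρ hrρ hXn hYn hX2 hY2
  have s2 := scalar2 hΦ hρ hrρ hXn hYn hX2 hY2
  have s3 := scalar3 hΦ hρ hrρ hXn hYn hX2 hY2
  have s4 := scalar4 hΦ hρ hrρ hXn hYn hX2 hY2
  have hC2 : (4:ℝ) ≤ (s + 1) ^ 2 * (2 * 2 ^ s) := by
    have e1 : (0:ℝ) ≤ ((s + 1) ^ 2 - 4) * (2 * 2 ^ s - 2) := by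
      apply mul_nonneg
      · nlinarith [hΦ.s_ge_one]
      · linarith
    nlinarith [e1, hK1, hΦ.s_ge_one]
  constructor
  · have up : 0 ≤ ((s + 1) ^ 2 * (2 * 2 ^ s) * deriv Φ (r + ρ) * (r ^ 2 + ρ ^ 2)
          - (u ^ 2 * r ^ 2 + v ^ 2 * ρ ^ 2) * (r + ρ))
        + (2 * (u * v) * (r + ρ) - 2 * ((s + 1) ^ 2 * (2 * 2 ^ s)) * deriv Φ (r + ρ)) * p := by
      apply affine hp
      · linarith [s4]
      · have h5 := mul_le_mul_of_nonneg_right s1 hT.le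
        have h6 := mul_le_mul_of_nonneg_right hC2
          (mul_nonneg (mul_nonneg hφT.le hT.le) hT.le)
        linarith [h5, h6]
    linarith [up]
  · have lo : 0 ≤ (4 * (2 ^ s) ^ 2 * (u ^ 2 * r ^ 2 + v ^ 2 * ρ ^ 2) * (r + ρ)
          - deriv Φ (r + ρ) * (r ^ 2 + ρ ^ 2))
        + (2 * deriv Φ (r + ρ) - 4 * (2 ^ s) ^ 2 * (2 * (u * v)) * (r + ρ)) * p := by
      apply affine hp
      · linarith [s3]
      · have h5 := mul_le_mul_of_nonneg_right s2 hT.le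
        have h8 : (2:ℝ) * 2 ^ s ≤ 4 * (2 ^ s) ^ 2 := by nlinarith [hK1]
        have h7 := mul_le_mul_of_nonneg_right h8
          (mul_nonneg (sq_nonneg (u * r + v * ρ)) hT.le)
        linarith [h5, h7]
    linarith [lo]

theorem keyE_aux (hΦ : IsNFunction Φ s) {n : ℕ} (a b : EuclideanSpace ℝ (Fin n))
    (ha : a ≠ 0) (hb : b ≠ 0) (hba : ‖b‖ ≤ ‖a‖) :
    ‖VPhi Φ a - VPhi Φ b‖ ^ 2 * (‖a‖ + ‖b‖)
        ≤ (s + 1) ^ 2 * (2 * 2 ^ s) * deriv Φ (‖a‖ + ‖b‖) * ‖a - b‖ ^ 2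
      ∧ deriv Φ (‖a‖ + ‖b‖) * ‖a - b‖ ^ 2
        ≤ 4 * (2 ^ s) ^ 2 * (‖VPhi Φ a - VPhi Φ b‖ ^ 2 * (‖a‖ + ‖b‖)) := by
  have hρ : 0 < ‖b‖ := norm_pos_iff.mpr hb
  have hr : 0 < ‖a‖ := norm_pos_iff.mpr ha
  have hφr := hΦ.deriv_pos _ hr
  have hφρ := hΦ.deriv_pos _ hρ
  have hu : 0 ≤ (deriv Φ ‖a‖ / ‖a‖) ^ ((1:ℝ)/2) :=
    Real.rpow_nonneg (div_nonneg hφr.le hr.le) _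
  have hv : 0 ≤ (deriv Φ ‖b‖ / ‖b‖) ^ ((1:ℝ)/2) :=
    Real.rpow_nonneg (div_nonneg hφρ.le hρ.le) _
  have hu2 : ((deriv Φ ‖a‖ / ‖a‖) ^ ((1:ℝ)/2)) ^ 2 = deriv Φ ‖a‖ / ‖a‖ := by
    rw [← Real.rpow_natCast _ 2, ← Real.rpow_mul (div_nonneg hφr.le hr.le)]
    norm_num
  have hv2 : ((deriv Φ ‖b‖ / ‖b‖) ^ ((1:ℝ)/2)) ^ 2 = deriv Φ ‖b‖ / ‖b‖ := by
    rw [← Real.rpow_natCast _ 2, ← Real.rpow_mul (div_nonneg hφρ.le hρ.le)]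
    norm_num
  have hp : |⟪a, b⟫| ≤ ‖a‖ * ‖b‖ := abs_real_inner_le_norm a b
  have hN : ‖VPhi Φ a - VPhi Φ b‖ ^ 2
      = ((deriv Φ ‖a‖ / ‖a‖) ^ ((1:ℝ)/2)) ^ 2 * ‖a‖ ^ 2
        - 2 * ((deriv Φ ‖a‖ / ‖a‖) ^ ((1:ℝ)/2) * (deriv Φ ‖b‖ / ‖b‖) ^ ((1:ℝ)/2)) * ⟪a, b⟫
        + ((deriv Φ ‖b‖ / ‖b‖) ^ ((1:ℝ)/2)) ^ 2 * ‖b‖ ^ 2 := by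
    rw [VPhi, VPhi, norm_sub_sq_real, norm_smul, norm_smul, real_inner_smul_left,
      real_inner_smul_right]
    simp only [Real.norm_eq_abs, abs_of_nonneg hu, abs_of_nonneg hv]
    ring
  have hM : ‖a - b‖ ^ 2 = ‖a‖ ^ 2 - 2 * ⟪a, b⟫ + ‖b‖ ^ 2 := norm_sub_sq_real a b
  obtain ⟨c1, c2⟩ := keyE_core hΦ hρ hba hu hv hu2 hv2 hp
  rw [hN, hM]
  exact ⟨c1, c2⟩


theorem sq_rpow_half {x : ℝ} (hx : 0 ≤ x) : (x ^ ((1:ℝ)/2)) ^ 2 = x := by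
  rw [← Real.rpow_natCast _ 2, ← Real.rpow_mul hx]
  norm_num

theorem normVPhi_sq (hΦ : IsNFunction Φ s) {n : ℕ} {b : EuclideanSpace ℝ (Fin n)}
    (hb : b ≠ 0) : ‖VPhi Φ b‖ ^ 2 = deriv Φ ‖b‖ * ‖b‖ := by
  have hρ : 0 < ‖b‖ := norm_pos_iff.mpr hb
  have hφρ := hΦ.deriv_pos _ hρ
  have h1 : ‖VPhi Φ b‖ ^ 2 = ((deriv Φ ‖b‖ / ‖b‖) ^ ((1:ℝ)/2)) ^ 2 * ‖b‖ ^ 2 := by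
    rw [VPhi, norm_smul, mul_pow, Real.norm_eq_abs, sq_abs]
  rw [h1, sq_rpow_half (div_nonneg hφρ.le hρ.le)]
  field_simp

theorem keyE (hΦ : IsNFunction Φ s) {n : ℕ} (a b : EuclideanSpace ℝ (Fin n)) (hb : b ≠ 0) :
    ‖VPhi Φ a - VPhi Φ b‖ ^ 2 * (‖a‖ + ‖b‖)
        ≤ (s + 1) ^ 2 * (2 * 2 ^ s) * deriv Φ (‖a‖ + ‖b‖) * ‖a - b‖ ^ 2
      ∧ deriv Φ (‖a‖ + ‖b‖) * ‖a - b‖ ^ 2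
        ≤ 4 * (2 ^ s) ^ 2 * (‖VPhi Φ a - VPhi Φ b‖ ^ 2 * (‖a‖ + ‖b‖)) := by
  have hK1 : (1:ℝ) ≤ 2 ^ s := Real.one_le_rpow (by norm_num) (le_trans zero_le_one hΦ.s_ge_one)
  by_cases ha : a = 0
  · subst ha
    have hρ : 0 < ‖b‖ := norm_pos_iff.mpr hb
    have hφρ := hΦ.deriv_pos _ hρ
    have hnb := normVPhi_sq hΦ hb
    simp only [VPhi_zero, zero_sub, norm_neg, norm_zero, zero_add, hnb]
    have hC2 : (1:ℝ) ≤ (s + 1) ^ 2 * (2 * 2 ^ s) := by nlinarith [hΦ.s_ge_one, hK1]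
    constructor
    · nlinarith [mul_pos hφρ hρ, mul_pos (mul_pos hφρ hρ) hρ]
    · have h9 : (0:ℝ) ≤ ((2 ^ s) ^ 2 - 1) * (deriv Φ ‖b‖ * ‖b‖ * ‖b‖) := by
        apply mul_nonneg
        · nlinarith [hK1]
        · positivity
      nlinarith [h9, mul_pos (mul_pos hφρ hρ) hρ]
  · rcases le_total ‖b‖ ‖a‖ with h | h
    · exact keyE_aux hΦ a b ha hb h
    · obtain ⟨h1, h2⟩ := keyE_aux hΦ b a hb ha h
      rw [norm_sub_rev (VPhi Φ b), norm_sub_rev b, add_comm ‖b‖] at h1 h2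
      exact ⟨h1, h2⟩

theorem VPhi_contAt (hΦ : IsNFunction Φ s) {n : ℕ} {z : EuclideanSpace ℝ (Fin n)}
    (hz : z ≠ 0) : ContinuousAt (VPhi Φ) z := by
  have hr : 0 < ‖z‖ := norm_pos_iff.mpr hz
  have h1 : ContinuousAt (fun w : EuclideanSpace ℝ (Fin n) => deriv Φ ‖w‖ / ‖w‖) z := by
    apply ContinuousAt.div
    · exact ((contOn hΦ).continuousAt (Ioi_mem_nhds hr)).comp continuous_norm.continuousAt
    · exact continuous_norm.continuousAt
    · exact ne_of_gt hr
  have h4 : ContinuousAt (fun w : EuclideanSpace ℝ (Fin n) =>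
      (deriv Φ ‖w‖ / ‖w‖) ^ ((1:ℝ)/2)) z :=
    h1.rpow_const (Or.inr (by norm_num))
  have h3 : ContinuousAt (fun w : EuclideanSpace ℝ (Fin n) =>
      ((deriv Φ ‖w‖ / ‖w‖) ^ ((1:ℝ)/2)) • w) z :=
    h4.smul continuousAt_id
  exact h3

end NFAux

open NFAux

/-- For `n ≥ 2` and `s ≥ 1` there is `c > 0`, depending only on `n` and
`s`, such that for every N-function `Φ` with index `s` and all `z₁, z₂ ∈ ℝⁿ∖{0}`,
`|V_Φ(z₂) − V_Φ(z₁)|² ≤ c·∫₀¹ |V_Φ(θz₂ + (1−θ)z₁) − V_Φ(z₁)|²·θ⁻¹ dθ`. -/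
theorem statement13 (n : ℕ) (hn : 2 ≤ n) (s : ℝ) (hs : 1 ≤ s) :
    ∃ c : ℝ, 0 < c ∧
      ∀ Φ : ℝ → ℝ, IsNFunction Φ s →
        ∀ z₁ z₂ : EuclideanSpace ℝ (Fin n), z₁ ≠ 0 → z₂ ≠ 0 →
          ‖VPhi Φ z₂ - VPhi Φ z₁‖ ^ 2
            ≤ c * ∫ θ in (0 : ℝ)..1,
                ‖VPhi Φ (θ • z₂ + (1 - θ) • z₁) - VPhi Φ z₁‖ ^ 2 * θ⁻¹ := by
  have hK0 : (0:ℝ) < 2 ^ s := Real.rpow_pos_of_pos (by norm_num) s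
  have hK1 : (1:ℝ) ≤ 2 ^ s := Real.one_le_rpow (by norm_num) (by linarith)
  have hs1 : (0:ℝ) < s + 1 := by linarith
  refine ⟨128 * (s + 1) ^ 2 * ((2:ℝ) ^ s) ^ 5, by positivity, ?_⟩
  intro Φ hΦ z₁ z₂ h₁ h₂
  set f : ℝ → ℝ := fun θ => ‖VPhi Φ (θ • z₂ + (1 - θ) • z₁) - VPhi Φ z₁‖ ^ 2 * θ⁻¹ with hfdef
  by_cases hzz : z₂ = z₁
  · subst hzz
    have hf0 : ∀ θ : ℝ, f θ = 0 := by
      intro θ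
      have hθ : θ • z₂ + (1 - θ) • z₂ = z₂ := by
        rw [← add_smul]
        norm_num
      simp [hfdef, hθ]
    have hint : (∫ θ in (0:ℝ)..1, f θ) = 0 := by
      simp [funext hf0]
    rw [hint]
    simp
  -- main case
  have hdne : z₂ - z₁ ≠ 0 := sub_ne_zero_of_ne hzz
  have hd : 0 < ‖z₂ - z₁‖ := norm_pos_iff.mpr hdne
  have hz1 : 0 < ‖z₁‖ := norm_pos_iff.mpr h₁
  have hz2 : 0 < ‖z₂‖ := norm_pos_iff.mpr h₂
  have hT0 : 0 < ‖z₂‖ + ‖z₁‖ := by linarith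
  have hγsub : ∀ θ : ℝ, (θ • z₂ + (1 - θ) • z₁) - z₁ = θ • (z₂ - z₁) := by
    intro θ
    rw [smul_sub, sub_smul, one_smul]
    abel
  have hγnorm : ∀ θ : ℝ, 0 ≤ θ → ‖(θ • z₂ + (1 - θ) • z₁) - z₁‖ = θ * ‖z₂ - z₁‖ := by
    intro θ hθ
    rw [hγsub, norm_smul, Real.norm_eq_abs, abs_of_nonneg hθ]
  have hγle : ∀ θ : ℝ, 0 ≤ θ → θ ≤ 1 → ‖θ • z₂ + (1 - θ) • z₁‖ ≤ ‖z₂‖ + ‖z₁‖ := by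
    intro θ hθ0 hθ1
    calc ‖θ • z₂ + (1 - θ) • z₁‖ ≤ ‖θ • z₂‖ + ‖(1 - θ) • z₁‖ := norm_add_le _ _
    _ = θ * ‖z₂‖ + (1 - θ) * ‖z₁‖ := by
        rw [norm_smul, norm_smul, Real.norm_eq_abs, Real.norm_eq_abs,
          abs_of_nonneg hθ0, abs_of_nonneg (by linarith : (0:ℝ) ≤ 1 - θ)]
    _ ≤ ‖z₂‖ + ‖z₁‖ := by nlinarith [hz1.le, hz2.le]
  have hTle : ∀ θ : ℝ, 0 ≤ θ → θ ≤ 1 →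
      ‖θ • z₂ + (1 - θ) • z₁‖ + ‖z₁‖ ≤ 2 * (‖z₂‖ + ‖z₁‖) := by
    intro θ hθ0 hθ1
    have := hγle θ hθ0 hθ1
    linarith
  have hφ2T := hΦ.deriv_pos (2 * (‖z₂‖ + ‖z₁‖)) (by linarith)
  -- bound for integrability
  have hbd : ∀ θ ∈ Ioc (0:ℝ) 1, f θ ≤
      (s + 1) ^ 2 * (2 * 2 ^ s) * deriv Φ (2 * (‖z₂‖ + ‖z₁‖)) * ‖z₂ - z₁‖ ^ 2 / ‖z₁‖ := by
    intro θ hθ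
    obtain ⟨hθ0, hθ1⟩ := hθ
    obtain ⟨e1, -⟩ := keyE hΦ (θ • z₂ + (1 - θ) • z₁) z₁ h₁
    have hTθ : 0 < ‖θ • z₂ + (1 - θ) • z₁‖ + ‖z₁‖ := by
      linarith [norm_nonneg (θ • z₂ + (1 - θ) • z₁)]
    have hφm : deriv Φ (‖θ • z₂ + (1 - θ) • z₁‖ + ‖z₁‖) ≤ deriv Φ (2 * (‖z₂‖ + ‖z₁‖)) :=
      mono hΦ hTθ (hTle θ hθ0.le hθ1)
    have hn1 : ‖(θ • z₂ + (1 - θ) • z₁) - z₁‖ ^ 2 = θ ^ 2 * ‖z₂ - z₁‖ ^ 2 := by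
      rw [hγnorm θ hθ0.le]; ring
    have hg0 : 0 ≤ ‖VPhi Φ (θ • z₂ + (1 - θ) • z₁) - VPhi Φ z₁‖ ^ 2 := sq_nonneg _
    have hC2pos : (0:ℝ) < (s + 1) ^ 2 * (2 * 2 ^ s) := by positivity
    have key2 : ‖VPhi Φ (θ • z₂ + (1 - θ) • z₁) - VPhi Φ z₁‖ ^ 2 * ‖z₁‖
        ≤ (s + 1) ^ 2 * (2 * 2 ^ s) * deriv Φ (2 * (‖z₂‖ + ‖z₁‖)) * (θ ^ 2 * ‖z₂ - z₁‖ ^ 2) := by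
      have t1 : ‖VPhi Φ (θ • z₂ + (1 - θ) • z₁) - VPhi Φ z₁‖ ^ 2 * ‖z₁‖
          ≤ ‖VPhi Φ (θ • z₂ + (1 - θ) • z₁) - VPhi Φ z₁‖ ^ 2
            * (‖θ • z₂ + (1 - θ) • z₁‖ + ‖z₁‖) := by
        apply mul_le_mul_of_nonneg_left _ hg0
        linarith [norm_nonneg (θ • z₂ + (1 - θ) • z₁)]
      have t2 := mul_le_mul_of_nonneg_right hφm
        (show (0:ℝ) ≤ (s + 1) ^ 2 * (2 * 2 ^ s) * (θ ^ 2 * ‖z₂ - z₁‖ ^ 2) by positivity)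
      rw [hn1] at e1
      nlinarith [t1, t2, e1]
    show ‖VPhi Φ (θ • z₂ + (1 - θ) • z₁) - VPhi Φ z₁‖ ^ 2 * θ⁻¹ ≤ _
    rw [le_div_iff₀ hz1]
    have hi : (0:ℝ) ≤ θ⁻¹ := inv_nonneg.mpr hθ0.le
    have k3 := mul_le_mul_of_nonneg_right key2 hi
    have k4 : (s + 1) ^ 2 * (2 * 2 ^ s) * deriv Φ (2 * (‖z₂‖ + ‖z₁‖))
        * (θ ^ 2 * ‖z₂ - z₁‖ ^ 2) * θ⁻¹
        = (s + 1) ^ 2 * (2 * 2 ^ s) * deriv Φ (2 * (‖z₂‖ + ‖z₁‖)) * ‖z₂ - z₁‖ ^ 2 * θ := by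
      field_simp
    have k5 : (s + 1) ^ 2 * (2 * 2 ^ s) * deriv Φ (2 * (‖z₂‖ + ‖z₁‖)) * ‖z₂ - z₁‖ ^ 2 * θ
        ≤ (s + 1) ^ 2 * (2 * 2 ^ s) * deriv Φ (2 * (‖z₂‖ + ‖z₁‖)) * ‖z₂ - z₁‖ ^ 2 := by
      nlinarith [mul_pos (mul_pos hC2pos hφ2T) (pow_pos hd 2)]
    calc ‖VPhi Φ (θ • z₂ + (1 - θ) • z₁) - VPhi Φ z₁‖ ^ 2 * θ⁻¹ * ‖z₁‖
        = ‖VPhi Φ (θ • z₂ + (1 - θ) • z₁) - VPhi Φ z₁‖ ^ 2 * ‖z₁‖ * θ⁻¹ := by ring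
    _ ≤ (s + 1) ^ 2 * (2 * 2 ^ s) * deriv Φ (2 * (‖z₂‖ + ‖z₁‖))
          * (θ ^ 2 * ‖z₂ - z₁‖ ^ 2) * θ⁻¹ := k3
    _ = _ * θ := k4
    _ ≤ _ := k5
  -- nonnegativity
  have hfnn : ∀ θ : ℝ, 0 ≤ θ → 0 ≤ f θ := by
    intro θ hθ
    exact mul_nonneg (sq_nonneg _) (inv_nonneg.mpr hθ)
  -- integrability
  have hfint : IntervalIntegrable f volume 0 1 := by
    rw [intervalIntegrable_iff, uIoc_of_le (by norm_num : (0:ℝ) ≤ 1)]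
    set S : Set ℝ := {θ : ℝ | θ • z₂ + (1 - θ) • z₁ = 0} with hSdef
    have hSsub : S.Subsingleton := by
      intro x hx y hy
      have hx' : x • z₂ + (1 - x) • z₁ = 0 := hx
      have hy' : y • z₂ + (1 - y) • z₁ = 0 := hy
      have hxy : (x - y) • (z₂ - z₁) = 0 := by
        have hid : (x - y) • (z₂ - z₁)
            = (x • z₂ + (1 - x) • z₁) - (y • z₂ + (1 - y) • z₁) := by
          module
        rw [hid, hx', hy', sub_zero]
      rcases smul_eq_zero.mp hxy with h | h
      · exact sub_eq_zero.mp h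
      · exact absurd (sub_eq_zero.mp h) hzz
    have hSm : MeasurableSet (Ioc (0:ℝ) 1 \ S) :=
      measurableSet_Ioc.diff hSsub.countable.measurableSet
    have hcont : ContinuousOn f (Ioc (0:ℝ) 1 \ S) := by
      intro θ hθ
      obtain ⟨hθI, hθS⟩ := hθ
      have hγne : θ • z₂ + (1 - θ) • z₁ ≠ (0 : EuclideanSpace ℝ (Fin n)) := hθS
      apply ContinuousAt.continuousWithinAt
      have hγc : Continuous (fun θ : ℝ => θ • z₂ + (1 - θ) • z₁) := by
        apply Continuous.add
        · exact continuous_id.smul continuous_const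
        · exact (continuous_const.sub continuous_id).smul continuous_const
      have c0 : ContinuousAt (VPhi Φ) (θ • z₂ + (1 - θ) • z₁) := VPhi_contAt hΦ hγne
      have hγθ : ContinuousAt (fun θ : ℝ => θ • z₂ + (1 - θ) • z₁) θ := hγc.continuousAt
      have c0' : ContinuousAt (fun θ : ℝ => VPhi Φ (θ • z₂ + (1 - θ) • z₁)) θ :=
        ContinuousAt.comp (x := θ) (f := fun θ : ℝ => θ • z₂ + (1 - θ) • z₁) c0 hγθ
      have c1 : ContinuousAt
          (fun θ : ℝ => ‖VPhi Φ (θ • z₂ + (1 - θ) • z₁) - VPhi Φ z₁‖ ^ 2) θ :=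
        ((c0'.sub continuousAt_const).norm).pow 2
      exact c1.mul (continuousAt_inv₀ (ne_of_gt hθI.1))
    have h0 : volume (Ioc (0:ℝ) 1 ∩ S) = 0 :=
      measure_mono_null inter_subset_right (hSsub.measure_zero _)
    have hae : volume.restrict (Ioc (0:ℝ) 1) = volume.restrict (Ioc (0:ℝ) 1 \ S) :=
      (Measure.restrict_congr_set (diff_ae_eq_self.mpr h0)).symm
    have hASM : AEStronglyMeasurable f (volume.restrict (Ioc (0:ℝ) 1)) := by
      rw [hae]
      exact hcont.aestronglyMeasurable hSm
    haveI : IsFiniteMeasure (volume.restrict (Ioc (0:ℝ) 1)) :=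
      ⟨by rw [Measure.restrict_apply_univ]; exact measure_Ioc_lt_top⟩
    apply Integrable.mono' (integrable_const
      ((s + 1) ^ 2 * (2 * 2 ^ s) * deriv Φ (2 * (‖z₂‖ + ‖z₁‖)) * ‖z₂ - z₁‖ ^ 2 / ‖z₁‖)) hASM
    rw [ae_restrict_iff' measurableSet_Ioc]
    apply ae_of_all
    intro θ hθ
    rw [Real.norm_eq_abs, abs_of_nonneg (hfnn θ hθ.1.le)]
    exact hbd θ hθ
  -- pointwise comparison on [1/2, 1]
  have hM0 : (0:ℝ) < 64 * (s + 1) ^ 2 * ((2:ℝ) ^ s) ^ 5 := by positivity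
  have hpt : ∀ θ ∈ Icc (1/2 : ℝ) 1,
      ‖VPhi Φ z₂ - VPhi Φ z₁‖ ^ 2 ≤ 64 * (s + 1) ^ 2 * ((2:ℝ) ^ s) ^ 5 * f θ := by
    intro θ hθ
    obtain ⟨hθh, hθ1⟩ := hθ
    have hθ0 : (0:ℝ) < θ := by linarith
    obtain ⟨e1, -⟩ := keyE hΦ z₂ z₁ h₁
    obtain ⟨-, e2⟩ := keyE hΦ (θ • z₂ + (1 - θ) • z₁) z₁ h₁
    have hTθ : 0 < ‖θ • z₂ + (1 - θ) • z₁‖ + ‖z₁‖ := by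
      linarith [norm_nonneg (θ • z₂ + (1 - θ) • z₁)]
    have hn1 : ‖θ • z₂ + (1 - θ) • z₁ - z₁‖ = θ * ‖z₂ - z₁‖ := hγnorm θ hθ0.le
    have ht1 : ‖z₂‖ - ‖z₁‖ ≤ ‖z₂ - z₁‖ := norm_sub_norm_le z₂ z₁
    have ht2 : ‖z₂ - z₁‖ ≤ 2 * (‖θ • z₂ + (1 - θ) • z₁‖ + ‖z₁‖) := by
      have hns := norm_sub_le (θ • z₂ + (1 - θ) • z₁) z₁
      rw [hn1] at hns
      nlinarith [hd]
    have ht3 : ‖z₁‖ ≤ ‖θ • z₂ + (1 - θ) • z₁‖ + ‖z₁‖ := by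
      linarith [norm_nonneg (θ • z₂ + (1 - θ) • z₁)]
    have hφa : deriv Φ (‖z₂‖ + ‖z₁‖)
        ≤ 2 ^ s * deriv Φ (2 * (‖θ • z₂ + (1 - θ) • z₁‖ + ‖z₁‖)) :=
      double hΦ (by linarith) hT0 (by linarith)
    have hφb : deriv Φ (2 * (‖θ • z₂ + (1 - θ) • z₁‖ + ‖z₁‖))
        ≤ 2 ^ s * deriv Φ (‖θ • z₂ + (1 - θ) • z₁‖ + ‖z₁‖) :=
      double hΦ hTθ (by linarith) (by linarith)
    have hφc : deriv Φ (‖z₂‖ + ‖z₁‖)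
        ≤ 2 ^ s * (2 ^ s * deriv Φ (‖θ • z₂ + (1 - θ) • z₁‖ + ‖z₁‖)) :=
      le_trans hφa (mul_le_mul_of_nonneg_left hφb hK0.le)
    have hC2nn : (0:ℝ) ≤ (s + 1) ^ 2 * (2 * 2 ^ s) := by positivity
    have hdd : ‖z₂ - z₁‖ ^ 2 ≤ 4 * (θ * ‖z₂ - z₁‖) ^ 2 := by
      have h10 : (0:ℝ) ≤ (4 * θ ^ 2 - 1) * ‖z₂ - z₁‖ ^ 2 :=
        mul_nonneg (by nlinarith) (sq_nonneg _)
      nlinarith [h10]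
    have q1 : ‖VPhi Φ z₂ - VPhi Φ z₁‖ ^ 2 * (‖z₂‖ + ‖z₁‖)
        ≤ (s + 1) ^ 2 * (2 * 2 ^ s)
          * (2 ^ s * (2 ^ s * deriv Φ (‖θ • z₂ + (1 - θ) • z₁‖ + ‖z₁‖))) * ‖z₂ - z₁‖ ^ 2 :=
      le_trans e1 (mul_le_mul_of_nonneg_right
        (mul_le_mul_of_nonneg_left hφc hC2nn) (sq_nonneg _))
    have q2 : (s + 1) ^ 2 * (2 * 2 ^ s)
          * (2 ^ s * (2 ^ s * deriv Φ (‖θ • z₂ + (1 - θ) • z₁‖ + ‖z₁‖))) * ‖z₂ - z₁‖ ^ 2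
        ≤ (s + 1) ^ 2 * (2 * 2 ^ s)
          * (2 ^ s * (2 ^ s * deriv Φ (‖θ • z₂ + (1 - θ) • z₁‖ + ‖z₁‖)))
          * (4 * (θ * ‖z₂ - z₁‖) ^ 2) := by
      apply mul_le_mul_of_nonneg_left hdd
      have := hΦ.deriv_pos _ hTθ
      positivity
    rw [hn1] at e2
    have q4 := mul_le_mul_of_nonneg_left e2
      (show (0:ℝ) ≤ 4 * ((s + 1) ^ 2 * (2 * 2 ^ s)) * (2 ^ s) ^ 2 by positivity)
    have hTθ2 := hTle θ (by linarith) hθ1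
    have q5 : ‖VPhi Φ (θ • z₂ + (1 - θ) • z₁) - VPhi Φ z₁‖ ^ 2
          * (‖θ • z₂ + (1 - θ) • z₁‖ + ‖z₁‖)
        ≤ ‖VPhi Φ (θ • z₂ + (1 - θ) • z₁) - VPhi Φ z₁‖ ^ 2 * (2 * (‖z₂‖ + ‖z₁‖)) :=
      mul_le_mul_of_nonneg_left hTθ2 (sq_nonneg _)
    have q6 := mul_le_mul_of_nonneg_left q5
      (show (0:ℝ) ≤ 4 * ((s + 1) ^ 2 * (2 * 2 ^ s)) * (2 ^ s) ^ 2 * (4 * (2 ^ s) ^ 2)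
        by positivity)
    have final : ‖VPhi Φ z₂ - VPhi Φ z₁‖ ^ 2 * (‖z₂‖ + ‖z₁‖)
        ≤ (64 * (s + 1) ^ 2 * ((2:ℝ) ^ s) ^ 5
            * ‖VPhi Φ (θ • z₂ + (1 - θ) • z₁) - VPhi Φ z₁‖ ^ 2) * (‖z₂‖ + ‖z₁‖) := by
      linarith [q1, q2, q4, q6]
    have hLg : ‖VPhi Φ z₂ - VPhi Φ z₁‖ ^ 2
        ≤ 64 * (s + 1) ^ 2 * ((2:ℝ) ^ s) ^ 5
            * ‖VPhi Φ (θ • z₂ + (1 - θ) • z₁) - VPhi Φ z₁‖ ^ 2 :=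
      le_of_mul_le_mul_right final hT0
    have hinv : 1 ≤ θ⁻¹ := (one_le_inv₀ hθ0).mpr hθ1
    show _ ≤ 64 * (s + 1) ^ 2 * ((2:ℝ) ^ s) ^ 5
        * (‖VPhi Φ (θ • z₂ + (1 - θ) • z₁) - VPhi Φ z₁‖ ^ 2 * θ⁻¹)
    have hstep : 64 * (s + 1) ^ 2 * ((2:ℝ) ^ s) ^ 5
          * ‖VPhi Φ (θ • z₂ + (1 - θ) • z₁) - VPhi Φ z₁‖ ^ 2
        ≤ 64 * (s + 1) ^ 2 * ((2:ℝ) ^ s) ^ 5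
          * (‖VPhi Φ (θ • z₂ + (1 - θ) • z₁) - VPhi Φ z₁‖ ^ 2 * θ⁻¹) := by
      have h9 : (0:ℝ) ≤ (64 * (s + 1) ^ 2 * ((2:ℝ) ^ s) ^ 5
          * ‖VPhi Φ (θ • z₂ + (1 - θ) • z₁) - VPhi Φ z₁‖ ^ 2) * (θ⁻¹ - 1) := by
        apply mul_nonneg (mul_nonneg hM0.le (sq_nonneg _))
        linarith
      nlinarith [h9]
    linarith [hLg, hstep]
  -- assemble integrals
  have hsub1 : Set.uIcc (0:ℝ) (1/2) ⊆ Set.uIcc (0:ℝ) 1 := by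
    rw [uIcc_of_le (by norm_num : (0:ℝ) ≤ 1/2), uIcc_of_le (by norm_num : (0:ℝ) ≤ 1)]
    exact Icc_subset_Icc (le_refl _) (by norm_num)
  have hsub2 : Set.uIcc (1/2:ℝ) 1 ⊆ Set.uIcc (0:ℝ) 1 := by
    rw [uIcc_of_le (by norm_num : (1/2:ℝ) ≤ 1), uIcc_of_le (by norm_num : (0:ℝ) ≤ 1)]
    exact Icc_subset_Icc (by norm_num) (le_refl _)
  have hfi1 : IntervalIntegrable f volume 0 (1/2) := hfint.mono_set hsub1
  have hfi2 : IntervalIntegrable f volume (1/2) 1 := hfint.mono_set hsub2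
  have hsplit := intervalIntegral.integral_add_adjacent_intervals hfi1 hfi2
  have hpos1 : 0 ≤ ∫ θ in (0:ℝ)..(1/2), f θ :=
    intervalIntegral.integral_nonneg (by norm_num) (fun u hu => hfnn u hu.1)
  have hI2nn : 0 ≤ ∫ θ in (1/2:ℝ)..1, f θ :=
    intervalIntegral.integral_nonneg (by norm_num) (fun u hu => hfnn u (by linarith [hu.1]))
  have hmono := intervalIntegral.integral_mono_on (by norm_num : (1/2:ℝ) ≤ 1)
    intervalIntegrable_const (hfi2.const_mul (64 * (s + 1) ^ 2 * ((2:ℝ) ^ s) ^ 5)) hpt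
  rw [intervalIntegral.integral_const, intervalIntegral.integral_const_mul, smul_eq_mul]
    at hmono
  rw [← hsplit]
  have hMI1 : 0 ≤ 64 * (s + 1) ^ 2 * ((2:ℝ) ^ s) ^ 5 * ∫ θ in (0:ℝ)..(1/2), f θ :=
    mul_nonneg hM0.le hpos1
  nlinarith [hmono, hMI1]
end
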